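/- arXiv:1805.01462 — 5 statements merged into one kernel-verified Lean document; each statement's English description precedes it below -/
import Mathlib

section
/- Let f(x) = ∫₀^∞ e^(-x t) / (t ((log t)² + π²)) dt for x > 0. Then for all x, y > 0 one has f(x) · f(y) ≤ f(x + y). (Equivalently, writing f(x) = e^(-x) − ν(−x), this reads ν(−x)ν(−y) + ν(−x−y) ≤ e^(-x) ν(−y) + e^(-y) ν(−x).) -/
open MeasureTheory Real Set

/-- The function `f(x) = ∫₀^∞ e^(-x t) / (t ((log t)² + π²)) dt` (which equals
`e^(-x) − ν(−x)` by Ramanujan's identity). -/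
noncomputable def ramanujanF (x : ℝ) : ℝ :=
  ∫ t in Set.Ioi (0 : ℝ),
    Real.exp (-x * t) / (t * ((Real.log t) ^ 2 + Real.pi ^ 2))

namespace RamanujanAux

/-- The weight function. -/
noncomputable def rg (t : ℝ) : ℝ := (t * ((Real.log t) ^ 2 + Real.pi ^ 2))⁻¹

lemma rg_nonneg {t : ℝ} (ht : 0 < t) : 0 ≤ rg t := by
  rw [rg]
  have h : 0 < (Real.log t) ^ 2 + Real.pi ^ 2 := by positivity
  positivity

lemma rg_measurable : Measurable rg := by
  apply Measurable.inv
  exact measurable_id.mul ((Real.measurable_log.pow_const 2).add measurable_const)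

lemma key_eq (u : ℝ) : |Real.exp u| • rg (Real.exp u) = (u ^ 2 + Real.pi ^ 2)⁻¹ := by
  rw [abs_of_pos (Real.exp_pos u), smul_eq_mul, rg, Real.log_exp, mul_inv,
    ← mul_assoc, mul_inv_cancel₀ (Real.exp_ne_zero u), one_mul]

lemma k_integrable : Integrable (fun u : ℝ => (u ^ 2 + Real.pi ^ 2)⁻¹) := by
  have h1 : Integrable (fun u : ℝ => (1 + (u / Real.pi) ^ 2)⁻¹) :=
    integrable_inv_one_add_sq.comp_div Real.pi_ne_zero
  have h2 := h1.const_mul ((Real.pi ^ 2)⁻¹)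
  refine h2.congr (Filter.Eventually.of_forall fun u => ?_)
  have hπ : (0:ℝ) < Real.pi ^ 2 := by positivity
  field_simp
  ring

lemma k_integral : ∫ u : ℝ, (u ^ 2 + Real.pi ^ 2)⁻¹ = 1 := by
  have h : ∀ u : ℝ, (u ^ 2 + Real.pi ^ 2)⁻¹
      = (Real.pi ^ 2)⁻¹ * (1 + (u / Real.pi) ^ 2)⁻¹ := by
    intro u
    have hπ : (0:ℝ) < Real.pi ^ 2 := by positivity
    field_simp
    ring
  simp_rw [h]
  rw [integral_const_mul, MeasureTheory.Measure.integral_comp_div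
    (fun v : ℝ => (1 + v ^ 2)⁻¹) Real.pi, integral_univ_inv_one_add_sq,
    abs_of_pos Real.pi_pos, smul_eq_mul]
  have hπ : (0:ℝ) < Real.pi := Real.pi_pos
  field_simp

lemma exp_deriv_subst : ∀ G : ℝ → ℝ,
    ∫ t in Set.Ioi (0:ℝ), G t = ∫ u : ℝ, |Real.exp u| • G (Real.exp u) := by
  intro G
  have h := integral_image_eq_integral_abs_deriv_smul (s := Set.univ)
    (f := Real.exp) (f' := Real.exp) MeasurableSet.univ
    (fun x _ => (Real.hasDerivAt_exp x).hasDerivWithinAt)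
    (Real.exp_injective.injOn) G
  rwa [Set.image_univ, Real.range_exp, MeasureTheory.Measure.restrict_univ] at h

lemma rg_integrableOn : IntegrableOn rg (Set.Ioi (0:ℝ)) := by
  have h := (integrableOn_image_iff_integrableOn_abs_deriv_smul (s := Set.univ)
    (f := Real.exp) (f' := Real.exp) MeasurableSet.univ
    (fun x _ => (Real.hasDerivAt_exp x).hasDerivWithinAt)
    (Real.exp_injective.injOn) rg)
  rw [Set.image_univ, Real.range_exp] at h
  rw [h]
  unfold IntegrableOn
  rw [MeasureTheory.Measure.restrict_univ]
  exact k_integrable.congr (Filter.Eventually.of_forall fun u => (key_eq u).symm)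

lemma rg_total : ∫ t in Set.Ioi (0:ℝ), rg t = 1 := by
  rw [exp_deriv_subst rg]
  simp_rw [key_eq]
  exact k_integral

/-- `F x t = exp(-x t) * rg t`. -/
noncomputable def F (x t : ℝ) : ℝ := Real.exp (-x * t) * rg t

lemma F_integrableOn {x : ℝ} (hx : 0 ≤ x) : IntegrableOn (F x) (Set.Ioi (0:ℝ)) := by
  refine rg_integrableOn.mono' ?_ ?_
  · exact ((Real.measurable_exp.comp (measurable_const.mul measurable_id)).mul
      rg_measurable).aestronglyMeasurable
  · filter_upwards [ae_restrict_mem measurableSet_Ioi] with t ht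
    have ht0 : (0:ℝ) < t := ht
    have h1 : Real.exp (-x * t) ≤ 1 := by
      rw [Real.exp_le_one_iff]
      nlinarith
    rw [F, norm_mul, Real.norm_eq_abs, Real.norm_eq_abs,
      abs_of_pos (Real.exp_pos _), abs_of_nonneg (rg_nonneg ht0)]
    calc Real.exp (-x * t) * rg t ≤ 1 * rg t :=
          mul_le_mul_of_nonneg_right h1 (rg_nonneg ht0)
      _ = rg t := one_mul _

lemma ramanujanF_eq (x : ℝ) : ramanujanF x = ∫ t in Set.Ioi (0:ℝ), F x t := by
  unfold ramanujanF F rg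
  simp_rw [div_eq_mul_inv]

end RamanujanAux

open RamanujanAux

/-- For all `x, y > 0`, `f(x) f(y) ≤ f(x + y)`. -/
theorem ramanujanF_supermultiplicative (x y : ℝ) (hx : 0 < x) (hy : 0 < y) :
    ramanujanF x * ramanujanF y ≤ ramanujanF (x + y) := by
  set μ := MeasureTheory.volume.restrict (Set.Ioi (0:ℝ)) with hμ
  -- the four summands
  have hFx := F_integrableOn hx.le
  have hFy := F_integrableOn hy.le
  have hFxy := F_integrableOn (by linarith : (0:ℝ) ≤ x + y)
  have hrg := rg_integrableOn
  have hT1 : Integrable (fun p : ℝ × ℝ => F (x+y) p.1 * rg p.2) (μ.prod μ) :=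
    Integrable.mul_prod hFxy hrg
  have hT2 : Integrable (fun p : ℝ × ℝ => rg p.1 * F (x+y) p.2) (μ.prod μ) :=
    Integrable.mul_prod hrg hFxy
  have hT3 : Integrable (fun p : ℝ × ℝ => F x p.1 * F y p.2) (μ.prod μ) :=
    Integrable.mul_prod hFx hFy
  have hT4 : Integrable (fun p : ℝ × ℝ => F y p.1 * F x p.2) (μ.prod μ) :=
    Integrable.mul_prod hFy hFx
  -- the Chebyshev integrand
  set Φ : ℝ × ℝ → ℝ := fun p =>
    ((Real.exp (-x * p.1) - Real.exp (-x * p.2)) *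
      (Real.exp (-y * p.1) - Real.exp (-y * p.2))) * (rg p.1 * rg p.2) with hΦ
  have hΦeq : ∀ p : ℝ × ℝ, Φ p =
      (F (x+y) p.1 * rg p.2 + rg p.1 * F (x+y) p.2) -
      (F x p.1 * F y p.2 + F y p.1 * F x p.2) := by
    intro p
    simp only [hΦ, F]
    have e1 : Real.exp (-(x+y) * p.1) = Real.exp (-x * p.1) * Real.exp (-y * p.1) := by
      rw [← Real.exp_add]; ring_nf
    have e2 : Real.exp (-(x+y) * p.2) = Real.exp (-x * p.2) * Real.exp (-y * p.2) := by
      rw [← Real.exp_add]; ring_nf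
    rw [e1, e2]; ring
  -- nonnegativity of Φ a.e.
  have hΦnonneg : 0 ≤ ∫ p, Φ p ∂(μ.prod μ) := by
    refine MeasureTheory.integral_nonneg_of_ae ?_
    have hprod : μ.prod μ
        = (MeasureTheory.volume.prod MeasureTheory.volume).restrict
            ((Set.Ioi (0:ℝ)) ×ˢ (Set.Ioi (0:ℝ))) := by
      rw [hμ, MeasureTheory.Measure.prod_restrict]
    rw [hprod]
    filter_upwards [MeasureTheory.ae_restrict_mem (measurableSet_Ioi.prod measurableSet_Ioi)]
      with p hp
    obtain ⟨hp1, hp2⟩ := hp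
    have h1 : (0:ℝ) < p.1 := hp1
    have h2 : (0:ℝ) < p.2 := hp2
    have hsign : 0 ≤ (Real.exp (-x * p.1) - Real.exp (-x * p.2)) *
        (Real.exp (-y * p.1) - Real.exp (-y * p.2)) := by
      rcases le_total p.1 p.2 with h | h
      · apply mul_nonneg <;>
        · rw [sub_nonneg, Real.exp_le_exp]; nlinarith
      · have hA : Real.exp (-x * p.1) - Real.exp (-x * p.2) ≤ 0 := by
          rw [sub_nonpos, Real.exp_le_exp]; nlinarith
        have hB : Real.exp (-y * p.1) - Real.exp (-y * p.2) ≤ 0 := by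
          rw [sub_nonpos, Real.exp_le_exp]; nlinarith
        nlinarith [hA, hB]
    exact mul_nonneg hsign (mul_nonneg (rg_nonneg h1) (rg_nonneg h2))
  -- expand the integral
  have hexp : ∫ p, Φ p ∂(μ.prod μ) =
      ((∫ t, F (x+y) t ∂μ) * (∫ t, rg t ∂μ) + (∫ t, rg t ∂μ) * (∫ t, F (x+y) t ∂μ)) -
      ((∫ t, F x t ∂μ) * (∫ t, F y t ∂μ) + (∫ t, F y t ∂μ) * (∫ t, F x t ∂μ)) := by
    have : ∫ p, Φ p ∂(μ.prod μ) =
        ∫ p : ℝ × ℝ, ((F (x+y) p.1 * rg p.2 + rg p.1 * F (x+y) p.2) -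
          (F x p.1 * F y p.2 + F y p.1 * F x p.2)) ∂(μ.prod μ) := by
      exact MeasureTheory.integral_congr_ae (Filter.Eventually.of_forall hΦeq)
    have h12 : Integrable (fun p : ℝ × ℝ => F (x+y) p.1 * rg p.2 + rg p.1 * F (x+y) p.2)
        (μ.prod μ) := hT1.add hT2
    have h34 : Integrable (fun p : ℝ × ℝ => F x p.1 * F y p.2 + F y p.1 * F x p.2)
        (μ.prod μ) := hT3.add hT4
    rw [this, MeasureTheory.integral_sub h12 h34,
      MeasureTheory.integral_add hT1 hT2, MeasureTheory.integral_add hT3 hT4,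
      MeasureTheory.integral_prod_mul, MeasureTheory.integral_prod_mul,
      MeasureTheory.integral_prod_mul, MeasureTheory.integral_prod_mul]
  have htotal : (∫ t, rg t ∂μ) = 1 := rg_total
  have hx' : ramanujanF x = ∫ t, F x t ∂μ := ramanujanF_eq x
  have hy' : ramanujanF y = ∫ t, F y t ∂μ := ramanujanF_eq y
  have hxy' : ramanujanF (x + y) = ∫ t, F (x+y) t ∂μ := ramanujanF_eq (x + y)
  rw [hexp, htotal, ← hx', ← hy', ← hxy'] at hΦnonneg
  linarith
end

section
/- Let x > 0, α > -1 and β > -1, and for each integer k ≥ 0 set I_k(β) = ∫₀^∞ x^(t+α) t^β (log t)^k / Γ(t+α+1) dt (the k-th derivative with respect of β of Γ(β+1)μ(x,β,α)). Then for every odd integer n ≥ 1, the Turán-type inequality I_{n-1}(β) · I_{n+1}(β) − I_n(β)² ≥ 0 holds. -/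
open MeasureTheory Real Set

section AuxVolterra

open Filter Asymptotics


lemma aux_tendsto0 (y : ℝ) (hy : 0 < y) :
    Tendsto (fun t : ℝ => y ^ t / Real.Gamma t) atTop (nhds 0) := by
  have hfac : Tendsto (fun n : ℕ => (max y 1 * y) * (y ^ n / (Nat.factorial n))) atTop (nhds 0) := by
    simpa using (FloorSemiring.tendsto_pow_div_factorial_atTop y).const_mul (max y 1 * y)
  have hfac2 : Tendsto (fun n : ℕ => (max y 1 * y) * (y ^ (n - 1) / (Nat.factorial (n - 1))))
      atTop (nhds 0) := hfac.comp (tendsto_sub_atTop_nat 1)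
  have hfloor : Tendsto (fun t : ℝ => (max y 1 * y) * (y ^ (⌊t⌋₊ - 1) / (Nat.factorial (⌊t⌋₊ - 1))))
      atTop (nhds 0) := hfac2.comp tendsto_nat_floor_atTop
  refine squeeze_zero' ?_ ?_ hfloor
  · filter_upwards [eventually_ge_atTop (3 : ℝ)] with t ht
    have ht0 : (0:ℝ) < t := by linarith
    exact div_nonneg (rpow_pos_of_pos hy t).le (Real.Gamma_pos_of_pos ht0).le
  · filter_upwards [eventually_ge_atTop (3 : ℝ)] with t ht
    set n : ℕ := ⌊t⌋₊ with hn
    have ht0 : (0:ℝ) ≤ t := by linarith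
    have hn3 : 3 ≤ n := Nat.le_floor (by exact_mod_cast ht)
    have hn1 : 1 ≤ n := by omega
    have hnt : (n : ℝ) ≤ t := Nat.floor_le ht0
    have htn : t < n + 1 := Nat.lt_floor_add_one t
    have hΓn : Real.Gamma n = (Nat.factorial (n - 1)) := by
      have h1 : ((n - 1 : ℕ) : ℝ) + 1 = (n : ℝ) := by
        push_cast [Nat.cast_sub hn1]; ring
      rw [← h1, Real.Gamma_nat_eq_factorial]
    have hΓmono : Real.Gamma n ≤ Real.Gamma t := by
      refine Real.Gamma_strictMonoOn_Ici.monotoneOn ?_ ?_ hnt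
      · simp only [mem_Ici]
        exact_mod_cast by omega
      · simp only [mem_Ici]; linarith
    have hfacpos : (0:ℝ) < (Nat.factorial (n - 1)) := by exact_mod_cast (Nat.factorial_pos (n-1))
    have hyt : y ^ t ≤ max y 1 * y ^ n := by
      have h1 : y ^ t = y ^ (n : ℝ) * y ^ (t - n) := by
        rw [← Real.rpow_add hy]; ring_nf
      have h2 : y ^ (t - n) ≤ max y 1 := by
        rcases le_total 1 y with hy1 | hy1
        · calc y ^ (t - n) ≤ y ^ (1:ℝ) :=
                Real.rpow_le_rpow_of_exponent_le hy1 (by linarith)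
            _ = y := Real.rpow_one y
            _ ≤ max y 1 := le_max_left _ _
        · calc y ^ (t - n) ≤ y ^ (0:ℝ) :=
                Real.rpow_le_rpow_of_exponent_ge hy hy1 (by linarith)
            _ = 1 := Real.rpow_zero y
            _ ≤ max y 1 := le_max_right _ _
      calc y ^ t = y ^ (n:ℝ) * y ^ (t - n) := h1
        _ ≤ y ^ (n:ℝ) * max y 1 := by
            nlinarith [Real.rpow_pos_of_pos hy (n:ℝ)]
        _ = max y 1 * y ^ n := by rw [Real.rpow_natCast]; ring
    have hyn : y ^ n = y * y ^ (n - 1) := by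
      conv_lhs => rw [show n = (n - 1) + 1 by omega]
      ring
    calc y ^ t / Real.Gamma t ≤ (max y 1 * y ^ n) / (Nat.factorial (n - 1)) :=
          div_le_div₀ (by positivity) hyt hfacpos (hΓn ▸ hΓmono)
      _ = (max y 1 * y) * (y ^ (n-1) / (Nat.factorial (n-1))) := by rw [hyn]; ring

lemma aux_tendsto (y c : ℝ) (hy : 0 < y) :
    Tendsto (fun t : ℝ => y ^ t / Real.Gamma (t + c)) atTop (nhds 0) := by
  have h1 : Tendsto (fun t : ℝ => y ^ (t + c) / Real.Gamma (t + c)) atTop (nhds 0) :=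
    (aux_tendsto0 y hy).comp (tendsto_atTop_add_const_right atTop c tendsto_id)
  have h2 := h1.const_mul (y ^ (-c))
  rw [mul_zero] at h2
  refine h2.congr fun t => ?_
  rw [← mul_div_assoc, ← Real.rpow_add hy]
  ring_nf

lemma aux_gamma_contAt {α t : ℝ} (hpos : 0 < t + α + 1) :
    ContinuousAt (fun s : ℝ => Real.Gamma (s + α + 1)) t := by
  have hg : ContinuousAt Real.Gamma (t + α + 1) := by
    refine (Real.differentiableAt_Gamma fun m => ?_).continuousAt
    have : (0:ℝ) ≤ m := m.cast_nonneg
    intro h; rw [h] at hpos; linarith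
  have hadd : ContinuousAt (fun s : ℝ => s + α + 1) t := by fun_prop
  exact ContinuousAt.comp (f := fun s : ℝ => s + α + 1) hg hadd

lemma aux_rpow_cont (x α : ℝ) (hx : 0 < x) : Continuous fun t : ℝ => x ^ (t + α) := by
  have hc : Continuous fun t : ℝ => Real.exp (Real.log x * (t + α)) :=
    Real.continuous_exp.comp (continuous_const.mul (continuous_id.add continuous_const))
  exact hc.congr fun t => (Real.rpow_def_of_pos hx (t + α)).symm

lemma aux_cont (x α β : ℝ) (hx : 0 < x) (hα : -1 < α) (k : ℕ) :
    ContinuousOn (fun t => x ^ (t + α) * t ^ β * (Real.log t) ^ k / Real.Gamma (t + α + 1))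
      (Ioi (0:ℝ)) := by
  intro t ht
  have ht0 : (0:ℝ) < t := ht
  have h1 := aux_rpow_cont x α hx
  have h2 : ContinuousAt (fun t : ℝ => t ^ β) t :=
    Real.continuousAt_rpow_const t β (Or.inl ht0.ne')
  have h3 : ContinuousAt (fun t : ℝ => (Real.log t) ^ k) t :=
    (Real.continuousAt_log ht0.ne').pow k
  have hpos : 0 < t + α + 1 := by linarith
  have h4 := aux_gamma_contAt (α := α) (t := t) hpos
  have h5 : Real.Gamma (t + α + 1) ≠ 0 := (Real.Gamma_pos_of_pos hpos).ne'
  exact (((h1.continuousAt.mul h2).mul h3).div h4 h5).continuousWithinAt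

lemma aux_integrable (x α β : ℝ) (hx : 0 < x) (hα : -1 < α) (hβ : -1 < β) (k : ℕ) :
    IntegrableOn (fun t => x ^ (t + α) * t ^ β * (Real.log t) ^ k / Real.Gamma (t + α + 1))
      (Ioi (0:ℝ)) := by
  set F := fun t => x ^ (t + α) * t ^ β * (Real.log t) ^ k / Real.Gamma (t + α + 1) with hF
  have hcont := aux_cont x α β hx hα k
  have h01 : IntegrableOn F (Ioc (0:ℝ) 1) := by
    set ε : ℝ := (β + 1) / (2 * (k + 1)) with hε
    have hε0 : 0 < ε := by
      rw [hε]
      have h0 : (0:ℝ) < β + 1 := by linarith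
      positivity
    have hkε : (k:ℝ) * ε ≤ (β + 1) / 2 := by
      have h1 : (k:ℝ) * ε ≤ ((k:ℝ) + 1) * ε := by nlinarith
      have h2 : ((k:ℝ) + 1) * ε = (β + 1) / 2 := by rw [hε]; field_simp
      linarith
    have hβε : -1 < β - k * ε := by linarith
    have hc0 : ContinuousOn (fun t : ℝ => x ^ (t + α) / Real.Gamma (t + α + 1)) (Icc 0 1) := by
      intro t ht
      have hpos : 0 < t + α + 1 := by have := ht.1; linarith
      exact (((aux_rpow_cont x α hx).continuousAt.div (aux_gamma_contAt hpos)
        (Real.Gamma_pos_of_pos hpos).ne').continuousWithinAt)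
    obtain ⟨C, hC⟩ := isCompact_Icc.exists_bound_of_continuousOn hc0
    have hmeas : AEStronglyMeasurable F (volume.restrict (Ioc (0:ℝ) 1)) :=
      (hcont.mono Ioc_subset_Ioi_self).aestronglyMeasurable measurableSet_Ioc
    have hgint : IntegrableOn (fun t : ℝ => (C / ε ^ k) * t ^ (β - k * ε)) (Ioc (0:ℝ) 1) := by
      have h1 : IntegrableOn (fun t : ℝ => t ^ (β - k * ε)) (Ioo (0:ℝ) 2) :=
        (intervalIntegral.integrableOn_Ioo_rpow_iff two_pos).mpr hβε
      exact (h1.mono_set fun t htm => ⟨htm.1, lt_of_le_of_lt htm.2 one_lt_two⟩).const_mul _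
    refine Integrable.mono' hgint hmeas ?_
    filter_upwards [ae_restrict_mem measurableSet_Ioc] with t ht
    have ht0 : 0 < t := ht.1
    have ht1 : t ≤ 1 := ht.2
    have hΓpos : 0 < Real.Gamma (t + α + 1) := Real.Gamma_pos_of_pos (by linarith)
    have hlog : |Real.log t| ≤ t ^ (-ε) / ε := by
      have h1 : |Real.log t| = Real.log t⁻¹ := by
        rw [Real.log_inv, abs_of_nonpos (Real.log_nonpos ht0.le ht1)]
      rw [h1]
      calc Real.log t⁻¹ ≤ (t⁻¹) ^ ε / ε := Real.log_le_rpow_div (by positivity) hε0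
        _ = t ^ (-ε) / ε := by rw [Real.inv_rpow ht0.le, ← Real.rpow_neg ht0.le]
    have hlogk : |Real.log t| ^ k ≤ t ^ (-(k:ℝ) * ε) / ε ^ k := by
      calc |Real.log t| ^ k ≤ (t ^ (-ε) / ε) ^ k := pow_le_pow_left₀ (abs_nonneg _) hlog k
        _ = (t ^ (-ε)) ^ k / ε ^ k := div_pow _ _ _
        _ = t ^ (-(k:ℝ) * ε) / ε ^ k := by
            rw [← Real.rpow_natCast (t ^ (-ε)) k, ← Real.rpow_mul ht0.le]
            ring_nf
    have hfac : x ^ (t + α) / Real.Gamma (t + α + 1) ≤ C := by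
      have := hC t ⟨ht0.le, ht1⟩
      exact (le_abs_self _).trans this
    have hfacpos : 0 < x ^ (t + α) / Real.Gamma (t + α + 1) := by positivity
    have htβ : (0:ℝ) < t ^ β := Real.rpow_pos_of_pos ht0 β
    have habs : ‖F t‖ = (x ^ (t + α) / Real.Gamma (t + α + 1)) * (t ^ β * |Real.log t| ^ k) := by
      rw [hF]
      simp only [norm_eq_abs, abs_div, abs_mul, abs_pow]
      rw [abs_of_pos (Real.rpow_pos_of_pos hx _), abs_of_pos htβ, abs_of_pos hΓpos]
      ring
    rw [habs]
    calc (x ^ (t + α) / Real.Gamma (t + α + 1)) * (t ^ β * |Real.log t| ^ k)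
        ≤ C * (t ^ β * (t ^ (-(k:ℝ) * ε) / ε ^ k)) := by
          refine mul_le_mul hfac ?_ (by positivity) ((norm_nonneg _).trans (hC 0 (by simp))) 
          exact mul_le_mul_of_nonneg_left hlogk htβ.le
      _ = (C / ε ^ k) * (t ^ β * t ^ (-(k:ℝ) * ε)) := by ring
      _ = (C / ε ^ k) * t ^ (β - k * ε) := by
          rw [← Real.rpow_add ht0]; ring_nf
  have h1i : IntegrableOn F (Ioi (1:ℝ)) := by
    have hconti : ContinuousOn F (Ici (1:ℝ)) :=
      hcont.mono fun t ht => show (0:ℝ) < t from lt_of_lt_of_le one_pos ht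
    refine integrable_of_isBigO_exp_neg one_pos hconti ?_
    set M : ℕ := ⌈β⌉₊ + k with hM
    set y : ℝ := x * Real.exp (M + 1) with hy
    have hy0 : 0 < y := by positivity
    have hsmall : ∀ᶠ t in atTop, x ^ α * (y ^ t / Real.Gamma (t + (α + 1))) < 1 := by
      have h := (aux_tendsto y (α + 1) hy0).const_mul (x ^ α)
      rw [mul_zero] at h
      exact h.eventually_lt_const one_pos
    refine Asymptotics.IsBigO.of_bound 1 ?_
    filter_upwards [hsmall, eventually_ge_atTop (1:ℝ)] with t hs ht1
    have ht0 : (0:ℝ) < t := lt_of_lt_of_le one_pos ht1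
    have hΓ : 0 < Real.Gamma (t + α + 1) := Real.Gamma_pos_of_pos (by linarith)
    have hlog0 : 0 ≤ Real.log t := Real.log_nonneg ht1
    have hFnn : 0 ≤ F t := by
      rw [hF]
      have h1 : (0:ℝ) < x ^ (t + α) := Real.rpow_pos_of_pos hx _
      have h2 : (0:ℝ) < t ^ β := Real.rpow_pos_of_pos ht0 _
      positivity
    have hts : t + (α + 1) = t + α + 1 := by ring
    rw [hts] at hs
    -- main chain
    have hlogt : Real.log t ≤ t := by
      have h := Real.add_one_le_exp (Real.log t)
      rw [Real.exp_log ht0] at h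
      linarith
    have hpoly : t ^ β * Real.log t ^ k ≤ t ^ ((M:ℝ)) := by
      have h1 : t ^ β ≤ t ^ ((⌈β⌉₊ : ℝ)) :=
        Real.rpow_le_rpow_of_exponent_le ht1 (Nat.le_ceil β)
      have h2 : Real.log t ^ k ≤ t ^ ((k:ℝ)) := by
        rw [Real.rpow_natCast]
        exact pow_le_pow_left₀ hlog0 hlogt k
      have h3 : t ^ β * Real.log t ^ k ≤ t ^ ((⌈β⌉₊ : ℝ)) * t ^ ((k:ℝ)) :=
        mul_le_mul h1 h2 (pow_nonneg hlog0 k) (Real.rpow_nonneg ht0.le _)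
      have h4 : t ^ ((⌈β⌉₊ : ℝ)) * t ^ ((k:ℝ)) = t ^ ((M:ℝ)) := by
        rw [← Real.rpow_add ht0, hM]
        push_cast
        ring_nf
      linarith
    have hpoly2 : t ^ ((M:ℝ)) ≤ Real.exp (t * M) := by
      calc t ^ ((M:ℝ)) ≤ Real.exp t ^ ((M:ℝ)) :=
            Real.rpow_le_rpow ht0.le (by nlinarith [Real.add_one_le_exp t]) (by positivity)
        _ = Real.exp (t * M) := (Real.exp_mul t (M:ℝ)).symm
    have hxy : x ^ t * Real.exp (t * M) = y ^ t * Real.exp (-t) := by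
      rw [hy, Real.mul_rpow hx.le (Real.exp_pos _).le, ← Real.exp_mul, mul_assoc,
        ← Real.exp_add]
      congr 2
      push_cast; ring
    have hchain : F t ≤ (x ^ α * (y ^ t / Real.Gamma (t + α + 1))) * Real.exp (-t) := by
      have hxt : x ^ (t + α) = x ^ t * x ^ α := by rw [Real.rpow_add hx]
      have h3 : (0:ℝ) < x ^ t := Real.rpow_pos_of_pos hx _
      have h4 : (0:ℝ) < x ^ α := Real.rpow_pos_of_pos hx _
      calc F t = (x ^ t * x ^ α) * (t ^ β * Real.log t ^ k) / Real.Gamma (t + α + 1) := by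
            simp only [hF]; rw [hxt]; ring
        _ ≤ (x ^ t * x ^ α) * Real.exp (t * M) / Real.Gamma (t + α + 1) := by
            gcongr
            exact hpoly.trans hpoly2
        _ = (x ^ α * (y ^ t / Real.Gamma (t + α + 1))) * Real.exp (-t) := by
            field_simp
            nlinarith [hxy]
    have hexp : (0:ℝ) < Real.exp (-t) := Real.exp_pos _
    have hfin : F t ≤ Real.exp (-t) := by
      calc F t ≤ (x ^ α * (y ^ t / Real.Gamma (t + α + 1))) * Real.exp (-t) := hchain
        _ ≤ 1 * Real.exp (-t) := by nlinarith
        _ = Real.exp (-t) := one_mul _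
    rw [Real.norm_eq_abs, Real.norm_eq_abs, abs_of_nonneg hFnn, neg_one_mul,
      abs_of_pos (Real.exp_pos _), one_mul]
    exact hfin
  have := h01.union h1i
  rwa [Ioc_union_Ioi_eq_Ioi zero_le_one] at this

end AuxVolterra

/-- `I_k(β) = ∫₀^∞ x^(t+α) t^β (log t)^k / Γ(t+α+1) dt`, the `k`-th derivative with
respect to `β` of `Γ(β+1) μ(x, β, α)`. -/
noncomputable def volterraI (x α : ℝ) (k : ℕ) (β : ℝ) : ℝ :=
  ∫ t in Set.Ioi (0 : ℝ),
    x ^ (t + α) * t ^ β * (Real.log t) ^ k / Real.Gamma (t + α + 1)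

/-- Turán type inequality for the derivatives of `Γ(β+1) μ(x, β, α)` in `β`,
for odd `n ≥ 1`. -/
theorem volterraI_turan (x α β : ℝ) (hx : 0 < x) (hα : -1 < α) (hβ : -1 < β)
    (n : ℕ) (hn1 : 1 ≤ n) (hn : Odd n) :
    0 ≤ volterraI x α (n - 1) β * volterraI x α (n + 1) β -
      volterraI x α n β ^ 2 := by
  obtain ⟨m, hm⟩ := hn
  set μ : Measure ℝ := volume.restrict (Set.Ioi (0:ℝ)) with hμ
  set f0 : ℝ → ℝ := fun t => x ^ (t + α) * t ^ β / Real.Gamma (t + α + 1) with hf0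
  set g : ℝ → ℝ := fun t => Real.sqrt (f0 t) * (Real.log t) ^ m with hg
  set h : ℝ → ℝ := fun t => Real.sqrt (f0 t) * (Real.log t) ^ (m + 1) with hh
  -- pointwise facts on Ioi 0
  have hptF : ∀ k : ℕ, ∀ t ∈ Set.Ioi (0:ℝ),
      x ^ (t + α) * t ^ β * (Real.log t) ^ k / Real.Gamma (t + α + 1)
        = f0 t * (Real.log t) ^ k := by
    intro k t _
    rw [hf0, mul_div_right_comm]
  have hf0nn : ∀ t ∈ Set.Ioi (0:ℝ), 0 ≤ f0 t := by
    intro t ht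
    have ht0 : (0:ℝ) < t := ht
    have hΓ : 0 < Real.Gamma (t + α + 1) := Real.Gamma_pos_of_pos (by linarith)
    have h1 : (0:ℝ) < x ^ (t + α) := Real.rpow_pos_of_pos hx _
    have h2 : (0:ℝ) < t ^ β := Real.rpow_pos_of_pos ht0 β
    rw [hf0]
    positivity
  have hsq : ∀ t ∈ Set.Ioi (0:ℝ), Real.sqrt (f0 t) ^ 2 = f0 t := fun t ht =>
    Real.sq_sqrt (hf0nn t ht)
  -- measurability
  have hf0cont : ContinuousOn f0 (Set.Ioi (0:ℝ)) := by
    have := aux_cont x α β hx hα 0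
    simpa [hf0] using this
  have hlogcont : ∀ j : ℕ, ContinuousOn (fun t : ℝ => (Real.log t) ^ j) (Set.Ioi (0:ℝ)) :=
    fun j => (Real.continuousOn_log.mono fun t ht => ne_of_gt ht).pow j
  have hgmeas : AEStronglyMeasurable g μ :=
    ((Real.continuous_sqrt.comp_continuousOn hf0cont).mul (hlogcont m)).aestronglyMeasurable
      measurableSet_Ioi
  have hhmeas : AEStronglyMeasurable h μ :=
    ((Real.continuous_sqrt.comp_continuousOn hf0cont).mul (hlogcont (m+1))).aestronglyMeasurable
      measurableSet_Ioi
  -- ae identities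
  have hgsq : ∀ᵐ t ∂μ, g t ^ 2 = f0 t * (Real.log t) ^ (2 * m) := by
    filter_upwards [ae_restrict_mem measurableSet_Ioi] with t ht
    rw [hg, mul_pow, hsq t ht, ← pow_mul, mul_comm m 2]
  have hhsq : ∀ᵐ t ∂μ, h t ^ 2 = f0 t * (Real.log t) ^ (2 * m + 2) := by
    filter_upwards [ae_restrict_mem measurableSet_Ioi] with t ht
    rw [hh, mul_pow, hsq t ht, ← pow_mul]
    ring_nf
  have hgh : ∀ᵐ t ∂μ, g t * h t = f0 t * (Real.log t) ^ (2 * m + 1) := by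
    filter_upwards [ae_restrict_mem measurableSet_Ioi] with t ht
    have : Real.sqrt (f0 t) * Real.sqrt (f0 t) = f0 t := by
      have := hsq t ht; nlinarith
    rw [hg, hh]
    calc Real.sqrt (f0 t) * Real.log t ^ m * (Real.sqrt (f0 t) * Real.log t ^ (m+1))
        = (Real.sqrt (f0 t) * Real.sqrt (f0 t)) * (Real.log t ^ m * Real.log t ^ (m+1)) := by
          ring
      _ = f0 t * (Real.log t) ^ (2 * m + 1) := by rw [this, ← pow_add]; ring_nf
  -- integrability
  have hgint : Integrable (fun t => g t ^ 2) μ := by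
    refine (aux_integrable x α β hx hα hβ (2 * m)).congr ?_
    filter_upwards [hgsq, ae_restrict_mem measurableSet_Ioi] with t h1 h2
    rw [h1, hptF (2*m) t h2]
  have hhint : Integrable (fun t => h t ^ 2) μ := by
    refine (aux_integrable x α β hx hα hβ (2 * m + 2)).congr ?_
    filter_upwards [hhsq, ae_restrict_mem measurableSet_Ioi] with t h1 h2
    rw [h1, hptF (2*m+2) t h2]
  have hgmem : MemLp g (ENNReal.ofReal 2) μ := by
    have := (memLp_two_iff_integrable_sq hgmeas).mpr hgint
    simpa [ENNReal.ofReal_ofNat] using this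
  have hhmem : MemLp h (ENNReal.ofReal 2) μ := by
    have := (memLp_two_iff_integrable_sq hhmeas).mpr hhint
    simpa [ENNReal.ofReal_ofNat] using this
  have hpq : (2:ℝ).HolderConjugate 2 := by
    exact Real.HolderConjugate.two_two
  have hkey := MeasureTheory.integral_mul_norm_le_Lp_mul_Lq hpq hgmem hhmem
  -- identify the three integrals
  have hA : volterraI x α (n - 1) β = ∫ t, ‖g t‖ ^ (2:ℝ) ∂μ := by
    rw [volterraI, hm]
    show ∫ t in Set.Ioi (0:ℝ), _ = _
    refine integral_congr_ae ?_
    filter_upwards [hgsq, ae_restrict_mem measurableSet_Ioi] with t h1 h2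
    rw [show 2 * m + 1 - 1 = 2 * m from rfl, hptF (2*m) t h2, ← h1, Real.norm_eq_abs,
      show ((2:ℝ)) = ((2:ℕ):ℝ) by norm_num, Real.rpow_natCast, sq_abs]
  have hB : volterraI x α (n + 1) β = ∫ t, ‖h t‖ ^ (2:ℝ) ∂μ := by
    rw [volterraI, hm]
    refine integral_congr_ae ?_
    filter_upwards [hhsq, ae_restrict_mem measurableSet_Ioi] with t h1 h2
    rw [show 2 * m + 1 + 1 = 2 * m + 2 from rfl, hptF (2*m+2) t h2, ← h1, Real.norm_eq_abs,
      show ((2:ℝ)) = ((2:ℕ):ℝ) by norm_num, Real.rpow_natCast, sq_abs]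
  have hC : volterraI x α n β = ∫ t, g t * h t ∂μ := by
    rw [volterraI, hm]
    refine integral_congr_ae ?_
    filter_upwards [hgh, ae_restrict_mem measurableSet_Ioi] with t h1 h2
    rw [hptF (2*m+1) t h2, ← h1]
  have hAnn : 0 ≤ volterraI x α (n - 1) β := by
    rw [hA]
    refine integral_nonneg fun t => ?_
    positivity
  have hBnn : 0 ≤ volterraI x α (n + 1) β := by
    rw [hB]
    refine integral_nonneg fun t => ?_
    positivity
  have habs : |volterraI x α n β| ≤
      (volterraI x α (n-1) β) ^ ((1:ℝ)/2) * (volterraI x α (n+1) β) ^ ((1:ℝ)/2) := by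
    rw [hC, hA, hB]
    calc |∫ t, g t * h t ∂μ| ≤ ∫ t, ‖g t * h t‖ ∂μ := by
          rw [← Real.norm_eq_abs]
          exact norm_integral_le_integral_norm _
      _ = ∫ t, ‖g t‖ * ‖h t‖ ∂μ := by
          refine integral_congr_ae (Filter.Eventually.of_forall fun t => ?_)
          simp [norm_mul]
      _ ≤ _ := hkey
  have hsq2 : ∀ A : ℝ, 0 ≤ A → (A ^ ((1:ℝ)/2)) ^ 2 = A := by
    intro A hA
    rw [← Real.rpow_natCast (A ^ ((1:ℝ)/2)) 2, ← Real.rpow_mul hA]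
    norm_num
  have hfin : volterraI x α n β ^ 2 ≤
      volterraI x α (n - 1) β * volterraI x α (n + 1) β := by
    have h1 := pow_le_pow_left₀ (abs_nonneg _) habs 2
    rw [sq_abs, mul_pow, hsq2 _ hAnn, hsq2 _ hBnn] at h1
    exact h1
  linarith
end

section
/- Let x > 0 and α > -1, and for each integer k ≥ 0 set I_k(β) = ∫₀^∞ x^(t+α) t^β (log t)^k / Γ(t+α+1) dt. For every odd integer n ≥ 1, the function Δ_n(β) = I_{n-1}(β) · I_{n+1}(β) − I_n(β)² is convex on (-1, ∞). -/
open MeasureTheory Real Set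

lemma gamma_lb {M y : ℝ} (hM : 1 ≤ M) (hy : 1 ≤ y) :
    Real.exp (-(2 * M)) * M ^ y ≤ Real.Gamma y := by
  have hM0 : (0:ℝ) < M := by linarith
  have hy0 : (0:ℝ) < y := by linarith
  rw [Real.Gamma_eq_integral hy0]
  have hint : IntegrableOn (fun s : ℝ => Real.exp (-s) * s ^ (y - 1)) (Ioi 0) :=
    Real.GammaIntegral_convergent hy0
  have hsub : Ioc M (2 * M) ⊆ Ioi (0 : ℝ) := fun s hs => hM0.trans_le hs.1.le
  have h1 : Real.exp (-(2 * M)) * M ^ y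
      = ∫ _ in Ioc M (2 * M), Real.exp (-(2 * M)) * M ^ (y - 1) := by
    rw [setIntegral_const, Real.volume_real_Ioc_of_le (by linarith),
      smul_eq_mul, show (2 * M - M) = M by ring, Real.rpow_sub hM0, Real.rpow_one]
    field_simp
  rw [h1]
  refine le_trans (setIntegral_mono_on ?_ (hint.mono_set hsub) measurableSet_Ioc ?_)
    (setIntegral_mono_set hint ?_ (HasSubset.Subset.eventuallyLE hsub))
  · exact integrableOn_const (by rw [Real.volume_Ioc]; exact ENNReal.ofReal_ne_top)
  · intro s hs
    refine mul_le_mul (Real.exp_le_exp.2 (by linarith [hs.2])) ?_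
      (Real.rpow_nonneg hM0.le _) (Real.exp_pos _).le
    exact Real.rpow_le_rpow hM0.le hs.1.le (by linarith)
  · filter_upwards [self_mem_ae_restrict measurableSet_Ioi] with s hs
    exact mul_nonneg (Real.exp_pos _).le (Real.rpow_nonneg (le_of_lt hs) _)

lemma gamma_ne (s : ℝ) (hs : 0 < s) : ∀ m : ℕ, s ≠ -m := fun m =>
  ne_of_gt (lt_of_le_of_lt (neg_nonpos.2 (Nat.cast_nonneg m)) hs)

lemma contOn_aux (x α : ℝ) (hx : 0 < x) (hα : -1 < α) (k : ℕ) (β : ℝ) :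
    ContinuousOn (fun t : ℝ => x ^ (t + α) * t ^ β * Real.log t ^ k / Real.Gamma (t + α + 1))
      (Ioi (0:ℝ)) := by
  intro t ht
  have ht0 : (0:ℝ) < t := ht
  have h1 : (0:ℝ) < t + α + 1 := by linarith
  apply ContinuousAt.continuousWithinAt
  refine ContinuousAt.div (ContinuousAt.mul (ContinuousAt.mul ?_ ?_) ?_) ?_ ?_
  · exact (Real.continuousAt_const_rpow hx.ne').comp (by fun_prop)
  · exact Real.continuousAt_rpow_const t β (Or.inl ht0.ne')
  · exact (Real.continuousAt_log ht0.ne').pow k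
  · exact ContinuousAt.comp (g := Real.Gamma)
      ((Real.differentiableAt_Gamma (gamma_ne _ h1)).continuousAt) (by fun_prop)
  · exact (Real.Gamma_pos_of_pos h1).ne'

lemma contOn_aux2 (x α : ℝ) (hx : 0 < x) (hα : -1 < α) :
    ContinuousOn (fun t : ℝ => x ^ (t + α) / Real.Gamma (t + α + 1)) (Icc (0:ℝ) 1) := by
  intro t ht
  have h1 : (0:ℝ) < t + α + 1 := by have := ht.1; linarith
  apply ContinuousAt.continuousWithinAt
  refine ContinuousAt.div ?_ ?_ (Real.Gamma_pos_of_pos h1).ne'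
  · exact (Real.continuousAt_const_rpow hx.ne').comp (by fun_prop)
  · exact ContinuousAt.comp (g := Real.Gamma)
      ((Real.differentiableAt_Gamma (gamma_ne _ h1)).continuousAt) (by fun_prop)

lemma vI_integrable (x α : ℝ) (hx : 0 < x) (hα : -1 < α) (k : ℕ) {β : ℝ} (hβ : -1 < β) :
    IntegrableOn (fun t => x ^ (t + α) * t ^ β * Real.log t ^ k / Real.Gamma (t + α + 1))
      (Ioi (0:ℝ)) := by
  set F : ℝ → ℝ := fun t => x ^ (t + α) * t ^ β * Real.log t ^ k / Real.Gamma (t + α + 1) with hF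
  have hmeas : ∀ s : Set ℝ, s ⊆ Ioi 0 → MeasurableSet s →
      AEStronglyMeasurable F (volume.restrict s) :=
    fun s hs hms => ((contOn_aux x α hx hα k β).mono hs).aestronglyMeasurable hms
  have hβ1 : (0:ℝ) < β + 1 := by linarith
  -- piece 1 : Ioc 0 1
  have piece1 : IntegrableOn F (Ioc (0:ℝ) 1) := by
    set δ : ℝ := (β + 1) / (2 * (k + 1)) with hδdef
    have hδ : 0 < δ := by positivity
    obtain ⟨A, hA⟩ := isCompact_Icc.exists_bound_of_continuousOn (contOn_aux2 x α hx hα)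
    refine Integrable.mono' (g := fun t => A / δ ^ k * t ^ ((β - 1)/2)) ?_
      (hmeas _ Ioc_subset_Ioi_self measurableSet_Ioc) ?_
    · exact ((intervalIntegral.intervalIntegrable_rpow'
        (by linarith : (-1:ℝ) < (β - 1)/2)).1).const_mul _
    · rw [ae_restrict_iff' measurableSet_Ioc]
      refine Filter.Eventually.of_forall fun t ht => ?_
      obtain ⟨ht0, ht1⟩ := ht
      have hΓ : 0 < Real.Gamma (t + α + 1) := Real.Gamma_pos_of_pos (by linarith)
      have hxp : 0 < x ^ (t + α) := Real.rpow_pos_of_pos hx _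
      have hfA : x ^ (t + α) / Real.Gamma (t + α + 1) ≤ A :=
        le_trans (le_abs_self _) (hA t ⟨ht0.le, ht1⟩)
      have hlog : |Real.log t| ≤ t ^ (-δ) / δ := by
        rw [abs_of_nonpos (Real.log_nonpos ht0.le ht1)]
        rw [← Real.log_inv]
        calc Real.log t⁻¹ ≤ (t⁻¹) ^ δ / δ := Real.log_le_rpow_div (by positivity) hδ
          _ = t ^ (-δ) / δ := by rw [Real.inv_rpow ht0.le, ← Real.rpow_neg ht0.le]
      have hlogk : |Real.log t| ^ k ≤ t ^ (-((β+1)/2)) / δ ^ k := by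
        calc |Real.log t| ^ k ≤ (t ^ (-δ) / δ) ^ k :=
              pow_le_pow_left₀ (abs_nonneg _) hlog k
          _ = t ^ (-(δ * k)) / δ ^ k := by
              rw [div_pow, ← Real.rpow_natCast (t ^ (-δ)) k, ← Real.rpow_mul ht0.le]
              ring_nf
          _ ≤ t ^ (-((β+1)/2)) / δ ^ k := by
              have hexp : t ^ (-(δ * (k:ℝ))) ≤ t ^ (-((β+1)/2)) := by
                apply Real.rpow_le_rpow_of_exponent_ge ht0 ht1
                have h1 : δ * (k:ℝ) ≤ δ * ((k:ℝ) + 1) := by nlinarith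
                have h2 : δ * ((k:ℝ) + 1) = (β + 1) / 2 := by
                  rw [hδdef, div_mul_eq_mul_div, div_eq_div_iff (by positivity) (by positivity)]; ring
                linarith
              rw [div_eq_mul_inv, div_eq_mul_inv]
              exact mul_le_mul_of_nonneg_right hexp (by positivity)
      have key : ‖F t‖ ≤ A * (t ^ β * (t ^ (-((β+1)/2)) / δ ^ k)) := by
        have : ‖F t‖ = x ^ (t + α) / Real.Gamma (t + α + 1) * (t ^ β * |Real.log t| ^ k) := by
          rw [hF]
          rw [norm_eq_abs, abs_div, abs_of_pos hΓ, abs_mul, abs_mul, abs_of_pos hxp,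
            abs_of_pos (Real.rpow_pos_of_pos ht0 β), abs_pow]
          ring
        rw [this]
        have hApos : 0 ≤ A := le_trans (norm_nonneg _) (hA 0 ⟨le_refl _, zero_le_one⟩)
        gcongr
      refine key.trans (le_of_eq ?_)
      rw [show t ^ β * (t ^ (-((β+1)/2)) / δ ^ k) = (t ^ β * t ^ (-((β+1)/2))) / δ ^ k by ring,
        ← Real.rpow_add ht0, show β + -((β+1)/2) = (β-1)/2 by ring]
      ring
  -- piece 2 : Ioi 1
  have piece2 : IntegrableOn F (Ioi (1:ℝ)) := by
    set c : ℝ := max (β + k) 0 with hcdef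
    have hc : 0 ≤ c := le_max_right _ _
    set M : ℝ := max 1 (Real.exp (Real.log x + c + 1)) with hMdef
    have hM1 : 1 ≤ M := le_max_left _ _
    have hM0 : (0:ℝ) < M := by linarith
    have hlogM : Real.log x + c + 1 ≤ Real.log M := by
      calc Real.log x + c + 1 = Real.log (Real.exp (Real.log x + c + 1)) :=
            (Real.log_exp _).symm
        _ ≤ Real.log M := Real.log_le_log (Real.exp_pos _) (le_max_right _ _)
    set D : ℝ := α * Real.log x - (α + 1) * Real.log M + 2 * M with hDdef
    refine Integrable.mono' (g := fun t => Real.exp D * Real.exp (-t)) ?_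
      (hmeas _ (fun t ht => mem_Ioi.2 (lt_trans one_pos (mem_Ioi.1 ht))) measurableSet_Ioi) ?_
    · have := (exp_neg_integrableOn_Ioi (1:ℝ) (one_pos)).const_mul (Real.exp D)
      simpa using this
    · rw [ae_restrict_iff' measurableSet_Ioi]
      refine Filter.Eventually.of_forall fun t ht => ?_
      have ht1 : (1:ℝ) < t := ht
      have ht0 : (0:ℝ) < t := by linarith
      have hlt : 0 ≤ Real.log t := Real.log_nonneg ht1.le
      have hΓpos : 0 < Real.Gamma (t + α + 1) := Real.Gamma_pos_of_pos (by linarith)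
      have hΓ : Real.exp (-(2*M)) * M ^ (t + α + 1) ≤ Real.Gamma (t + α + 1) :=
        gamma_lb hM1 (by linarith)
      have hN : 0 ≤ x ^ (t + α) * t ^ β * Real.log t ^ k := by positivity
      have hFt : ‖F t‖ = F t := by
        rw [norm_eq_abs, abs_of_nonneg]
        exact div_nonneg hN hΓpos.le
      rw [hFt]
      have hd0 : 0 < Real.exp (-(2*M)) * M ^ (t + α + 1) := by positivity
      have step1 : F t ≤ x ^ (t + α) * t ^ β * Real.log t ^ k
          / (Real.exp (-(2*M)) * M ^ (t + α + 1)) := by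
        rw [hF]
        exact div_le_div_of_nonneg_left hN hd0 hΓ |>.trans_eq rfl
      have hnum : x ^ (t + α) * t ^ β * Real.log t ^ k
          ≤ Real.exp ((t + α) * Real.log x) * Real.exp (c * t) := by
        have hlogt : Real.log t ≤ t := by
          have := Real.log_le_sub_one_of_pos ht0; linarith
        have h1 : t ^ β * Real.log t ^ k ≤ Real.exp (c * t) := by
          calc t ^ β * Real.log t ^ k ≤ t ^ β * t ^ (k:ℕ) := by
                gcongr
            _ = t ^ (β + k) := by
                rw [← Real.rpow_natCast t k, ← Real.rpow_add ht0]
            _ ≤ t ^ c := Real.rpow_le_rpow_of_exponent_le ht1.le (le_max_left _ _)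
            _ = Real.exp (c * Real.log t) := by
                rw [Real.rpow_def_of_pos ht0]; ring_nf
            _ ≤ Real.exp (c * t) := Real.exp_le_exp.2 (mul_le_mul_of_nonneg_left hlogt hc)
        calc x ^ (t + α) * t ^ β * Real.log t ^ k
            = x ^ (t + α) * (t ^ β * Real.log t ^ k) := by ring
          _ ≤ x ^ (t + α) * Real.exp (c * t) := by
              have : (0:ℝ) ≤ x ^ (t + α) := (Real.rpow_pos_of_pos hx _).le
              exact mul_le_mul_of_nonneg_left h1 this
          _ = Real.exp ((t + α) * Real.log x) * Real.exp (c * t) := by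
              rw [Real.rpow_def_of_pos hx]; ring_nf
      have step2 : x ^ (t + α) * t ^ β * Real.log t ^ k
          / (Real.exp (-(2*M)) * M ^ (t + α + 1)) ≤ Real.exp (D - t) := by
        have hMrw : Real.exp (-(2*M)) * M ^ (t + α + 1)
            = Real.exp (-(2*M) + Real.log M * (t + α + 1)) := by
          rw [Real.rpow_def_of_pos hM0, ← Real.exp_add]
        calc x ^ (t + α) * t ^ β * Real.log t ^ k / (Real.exp (-(2*M)) * M ^ (t + α + 1))
            ≤ (Real.exp ((t + α) * Real.log x) * Real.exp (c * t))
              / (Real.exp (-(2*M)) * M ^ (t + α + 1)) := by gcongr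
          _ = Real.exp ((t + α) * Real.log x + c * t - (-(2*M) + Real.log M * (t + α + 1))) := by
              rw [hMrw, ← Real.exp_add, ← Real.exp_sub]
          _ ≤ Real.exp (D - t) := by
              apply Real.exp_le_exp.2
              rw [hDdef]
              nlinarith [hlogM, ht1, hc]
      calc F t ≤ x ^ (t + α) * t ^ β * Real.log t ^ k
            / (Real.exp (-(2*M)) * M ^ (t + α + 1)) := step1
        _ ≤ Real.exp (D - t) := step2
        _ = Real.exp D * Real.exp (-t) := by rw [← Real.exp_add]; ring_nf
  rw [show Ioi (0:ℝ) = Ioc 0 1 ∪ Ioi 1 from (Ioc_union_Ioi_eq_Ioi zero_le_one).symm]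
  exact piece1.union piece2

/-- For odd `n ≥ 1`, `Δ_n(β) = I_{n-1}(β) I_{n+1}(β) − I_n(β)²` is convex on
`(-1, ∞)`. -/
theorem volterraI_delta_convex (x α : ℝ) (hx : 0 < x) (hα : -1 < α)
    (n : ℕ) (hn1 : 1 ≤ n) (hn : Odd n) :
    ConvexOn ℝ (Set.Ioi (-1 : ℝ))
      (fun β : ℝ =>
        volterraI x α (n - 1) β * volterraI x α (n + 1) β -
          volterraI x α n β ^ 2) := by
  obtain ⟨m, rfl⟩ : ∃ m, n = m + 1 := ⟨n - 1, (Nat.succ_pred_eq_of_pos hn1).symm⟩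
  have hmeven : Even m := by
    rcases hn with ⟨j, hj⟩
    exact ⟨j, by omega⟩
  simp only [Nat.add_sub_cancel]
  set μ : Measure ℝ := volume.restrict (Ioi 0) with hμ
  set Pr : Measure (ℝ × ℝ) := μ.prod μ with hPr
  set F : ℕ → ℝ → ℝ → ℝ :=
    fun k β t => x ^ (t + α) * t ^ β * Real.log t ^ k / Real.Gamma (t + α + 1) with hFdef
  set W : ℝ × ℝ → ℝ := fun p =>
    x ^ (p.1 + α) / Real.Gamma (p.1 + α + 1) * (x ^ (p.2 + α) / Real.Gamma (p.2 + α + 1)) *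
      ((Real.log p.1 * Real.log p.2) ^ m * (Real.log p.1 - Real.log p.2) ^ 2) / 2 with hWdef
  have hae : ∀ᵐ p ∂Pr, p.1 ∈ Ioi (0:ℝ) ∧ p.2 ∈ Ioi (0:ℝ) := by
    rw [hPr, hμ, Measure.prod_restrict]
    filter_upwards [ae_restrict_mem (measurableSet_Ioi.prod measurableSet_Ioi)] with p hp
    exact hp
  have hWnn : ∀ᵐ p ∂Pr, 0 ≤ W p := by
    filter_upwards [hae] with p hp
    have h1 : 0 < Real.Gamma (p.1 + α + 1) :=
      Real.Gamma_pos_of_pos (by have := hp.1; simp only [mem_Ioi] at this; linarith)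
    have h2 : 0 < Real.Gamma (p.2 + α + 1) :=
      Real.Gamma_pos_of_pos (by have := hp.2; simp only [mem_Ioi] at this; linarith)
    have h5 : 0 ≤ (Real.log p.1 * Real.log p.2) ^ m := hmeven.pow_nonneg _
    have h6 : 0 ≤ x ^ (p.1 + α) := (Real.rpow_pos_of_pos hx _).le
    have h7 : 0 ≤ x ^ (p.2 + α) := (Real.rpow_pos_of_pos hx _).le
    rw [hWdef]
    have := sq_nonneg (Real.log p.1 - Real.log p.2)
    positivity
  have key : ∀ β ∈ Ioi (-1:ℝ),
      (volterraI x α m β * volterraI x α (m + 2) β - volterraI x α (m + 1) β ^ 2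
        = ∫ p, W p * (p.1 * p.2) ^ β ∂Pr)
      ∧ Integrable (fun p => W p * (p.1 * p.2) ^ β) Pr := by
    intro β hβ
    have hInt : ∀ k, Integrable (F k β) μ := fun k => vI_integrable x α hx hα k hβ
    have hK1 : Integrable (fun p : ℝ × ℝ => F m β p.1 * F (m+2) β p.2) Pr :=
      (hInt m).mul_prod (hInt (m+2))
    have hK2 : Integrable (fun p : ℝ × ℝ => F (m+2) β p.1 * F m β p.2) Pr :=
      (hInt (m+2)).mul_prod (hInt m)
    have hK3 : Integrable (fun p : ℝ × ℝ => F (m+1) β p.1 * F (m+1) β p.2) Pr :=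
      (hInt (m+1)).mul_prod (hInt (m+1))
    have hS : Integrable (fun p : ℝ × ℝ =>
        (F m β p.1 * F (m+2) β p.2 + F (m+2) β p.1 * F m β p.2) / 2
          - F (m+1) β p.1 * F (m+1) β p.2) Pr := ((hK1.add hK2).div_const 2).sub hK3
    have heq : ∀ᵐ p ∂Pr,
        (F m β p.1 * F (m+2) β p.2 + F (m+2) β p.1 * F m β p.2) / 2
          - F (m+1) β p.1 * F (m+1) β p.2 = W p * (p.1 * p.2) ^ β := by
      filter_upwards [hae] with p hp
      obtain ⟨h1, h2⟩ := hp
      simp only [mem_Ioi] at h1 h2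
      have hg1 : Real.Gamma (p.1 + α + 1) ≠ 0 :=
        (Real.Gamma_pos_of_pos (by linarith)).ne'
      have hg2 : Real.Gamma (p.2 + α + 1) ≠ 0 :=
        (Real.Gamma_pos_of_pos (by linarith)).ne'
      rw [hFdef, hWdef]
      simp only
      rw [Real.mul_rpow h1.le h2.le]
      field_simp
      ring
    refine ⟨?_, hS.congr heq⟩
    have e1 : volterraI x α m β * volterraI x α (m+2) β
        = ∫ p, F m β p.1 * F (m+2) β p.2 ∂Pr := (integral_prod_mul (F m β) (F (m+2) β)).symm
    have e2 : volterraI x α m β * volterraI x α (m+2) β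
        = ∫ p, F (m+2) β p.1 * F m β p.2 ∂Pr := by
      rw [mul_comm]; exact (integral_prod_mul (F (m+2) β) (F m β)).symm
    have e3 : volterraI x α (m+1) β ^ 2
        = ∫ p, F (m+1) β p.1 * F (m+1) β p.2 ∂Pr := by
      rw [sq]; exact (integral_prod_mul (F (m+1) β) (F (m+1) β)).symm
    calc volterraI x α m β * volterraI x α (m+2) β - volterraI x α (m+1) β ^ 2
        = ((∫ p, F m β p.1 * F (m+2) β p.2 ∂Pr) + (∫ p, F (m+2) β p.1 * F m β p.2 ∂Pr)) / 2
          - ∫ p, F (m+1) β p.1 * F (m+1) β p.2 ∂Pr := by rw [← e1, ← e2, ← e3]; ring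
      _ = ∫ p, ((F m β p.1 * F (m+2) β p.2 + F (m+2) β p.1 * F m β p.2) / 2
          - F (m+1) β p.1 * F (m+1) β p.2) ∂Pr := by
          have hS4 : Integrable (fun p : ℝ × ℝ =>
              (F m β p.1 * F (m+2) β p.2 + F (m+2) β p.1 * F m β p.2) / 2) Pr :=
            (hK1.add hK2).div_const 2
          rw [integral_sub hS4 hK3, integral_div, integral_add hK1 hK2]
      _ = ∫ p, W p * (p.1 * p.2) ^ β ∂Pr := integral_congr_ae heq
  refine ⟨convex_Ioi _, fun β₁ hβ₁ β₂ hβ₂ a b ha hb hab => ?_⟩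
  have hγ : a • β₁ + b • β₂ ∈ Ioi (-1:ℝ) := convex_Ioi (-1) hβ₁ hβ₂ ha hb hab
  obtain ⟨e1, i1⟩ := key β₁ hβ₁
  obtain ⟨e2, i2⟩ := key β₂ hβ₂
  obtain ⟨e3, i3⟩ := key _ hγ
  simp only [smul_eq_mul] at hγ e3 ⊢
  rw [e1, e2, e3]
  have hpt : ∀ᵐ p ∂Pr, W p * (p.1 * p.2) ^ (a * β₁ + b * β₂)
      ≤ a * (W p * (p.1 * p.2) ^ β₁) + b * (W p * (p.1 * p.2) ^ β₂) := by
    filter_upwards [hae, hWnn] with p hp hW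
    have hc : 0 < p.1 * p.2 := mul_pos hp.1 hp.2
    have hconv : (p.1 * p.2) ^ (a * β₁ + b * β₂)
        ≤ a * (p.1 * p.2) ^ β₁ + b * (p.1 * p.2) ^ β₂ := by
      rw [Real.rpow_def_of_pos hc, Real.rpow_def_of_pos hc, Real.rpow_def_of_pos hc]
      have h := convexOn_exp.2 (mem_univ (Real.log (p.1*p.2) * β₁))
        (mem_univ (Real.log (p.1*p.2) * β₂)) ha hb hab
      simp only [smul_eq_mul] at h
      calc Real.exp (Real.log (p.1*p.2) * (a * β₁ + b * β₂))
          = Real.exp (a * (Real.log (p.1*p.2) * β₁) + b * (Real.log (p.1*p.2) * β₂)) := by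
            ring_nf
        _ ≤ a * Real.exp (Real.log (p.1*p.2) * β₁) + b * Real.exp (Real.log (p.1*p.2) * β₂) := h
    calc W p * (p.1*p.2) ^ (a*β₁+b*β₂) ≤ W p * (a * (p.1*p.2)^β₁ + b*(p.1*p.2)^β₂) :=
          mul_le_mul_of_nonneg_left hconv hW
      _ = a * (W p * (p.1*p.2)^β₁) + b * (W p * (p.1*p.2)^β₂) := by ring
  calc ∫ p, W p * (p.1*p.2) ^ (a*β₁+b*β₂) ∂Pr
      ≤ ∫ p, (a * (W p * (p.1*p.2)^β₁) + b * (W p * (p.1*p.2)^β₂)) ∂Pr :=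
        integral_mono_ae i3 ((i1.const_mul a).add (i2.const_mul b)) hpt
    _ = a * (∫ p, W p * (p.1*p.2)^β₁ ∂Pr) + b * (∫ p, W p * (p.1*p.2)^β₂ ∂Pr) := by
        rw [integral_add (i1.const_mul a) (i2.const_mul b), integral_const_mul,
          integral_const_mul]
end

section
/- Let 0 < x < 1, s > 0, and let α > z*, where z* ≈ 1.461632144 is the abscissa of the minimum of the gamma function on (0, ∞) (equivalently, Γ is strictly increasing on [z*, ∞)). Then the function β ↦ G*_β(x, α, s) is log-concave on (-1, ∞): for all β₁, β₂ > -1 and λ ∈ [0, 1], G*_{λβ₁+(1-λ)β₂}(x, α, s) ≥ G*_{β₁}(x, α, s)^λ · G*_{β₂}(x, α, s)^(1-λ). -/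
open MeasureTheory Real Set

/-- The Volterra function `μ(x, β, α) = ∫₀^∞ x^(t+α) t^β / (Γ(t+α+1) Γ(β+1)) dt`. -/
noncomputable def volterraMu (x β α : ℝ) : ℝ :=
  ∫ t in Set.Ioi (0 : ℝ),
    x ^ (t + α) * t ^ β / (Real.Gamma (t + α + 1) * Real.Gamma (β + 1))

/-- The incomplete Volterra function
`μ(x, β, α, s) = ∫_s^∞ x^(t+α) t^β / (Γ(t+α+1) Γ(β+1)) dt`. -/
noncomputable def volterraMuInc (x β α s : ℝ) : ℝ :=
  ∫ t in Set.Ioi s,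
    x ^ (t + α) * t ^ β / (Real.Gamma (t + α + 1) * Real.Gamma (β + 1))

/-- The incomplete Volterra function from below
`μ*(x, β, α, s) = ∫₀^s x^(t+α) t^β / (Γ(t+α+1) Γ(β+1)) dt`. -/
noncomputable def volterraMuIncStar (x β α s : ℝ) : ℝ :=
  ∫ t in Set.Ioc (0 : ℝ) s,
    x ^ (t + α) * t ^ β / (Real.Gamma (t + α + 1) * Real.Gamma (β + 1))

/-- The normalized incomplete Volterra function `G_β(x, α, s) = μ(x,β,α,s)/μ(x,β,α)`. -/
noncomputable def volterraG (β x α s : ℝ) : ℝ :=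
  volterraMuInc x β α s / volterraMu x β α

/-- The normalized incomplete Volterra function from below
`G*_β(x, α, s) = μ*(x,β,α,s)/μ(x,β,α)`. -/
noncomputable def volterraGStar (β x α s : ℝ) : ℝ :=
  volterraMuIncStar x β α s / volterraMu x β α


namespace VolterraProof

open Filter Topology


noncomputable def hf (x α t : ℝ) : ℝ := x ^ (t + α) / Real.Gamma (t + α + 1)

noncomputable def Jf (x α γ c : ℝ) : ℝ := ∫ t in Set.Ioc (0:ℝ) c, t ^ γ * hf x α t

noncomputable def Jinf (x α γ : ℝ) : ℝ := ∫ t in Set.Ioi (0:ℝ), t ^ γ * hf x α t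

section Basic

variable {x α zstar : ℝ}

lemma hf_pos (hx0 : 0 < x) (hαpos : 0 < α) {t : ℝ} (ht : 0 ≤ t) : 0 < hf x α t :=
  div_pos (rpow_pos_of_pos hx0 _) (Real.Gamma_pos_of_pos (by linarith))

lemma hf_continuousAt (hx0 : 0 < x) (hαpos : 0 < α) {t : ℝ} (ht : 0 ≤ t) :
    ContinuousAt (hf x α) t := by
  have h1 : ContinuousAt (fun t : ℝ => x ^ (t + α)) t := by
    have : (fun t : ℝ => x ^ (t + α)) = fun t : ℝ => Real.exp (Real.log x * (t + α)) := by
      funext u; rw [Real.rpow_def_of_pos hx0]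
    rw [this]
    exact (Real.continuous_exp.comp (continuous_const.mul (continuous_id.add
      continuous_const))).continuousAt
  have h2 : ContinuousAt (fun t : ℝ => Real.Gamma (t + α + 1)) t := by
    have hg : ContinuousAt Real.Gamma (t + α + 1) := by
      refine (Real.differentiableAt_Gamma fun m => ?_).continuousAt
      have h3 : (0:ℝ) < t + α + 1 := by linarith
      intro h
      rw [h] at h3
      have : (0:ℝ) ≤ (m:ℝ) := Nat.cast_nonneg m
      linarith
    have hc : Continuous fun t : ℝ => t + α + 1 := by continuity
    show ContinuousAt (Real.Gamma ∘ fun t : ℝ => t + α + 1) t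
    exact ContinuousAt.comp (x := t) hg hc.continuousAt
  exact h1.div h2 (Real.Gamma_pos_of_pos (by linarith)).ne'

lemma continuousOn_integrand (hx0 : 0 < x) (hαpos : 0 < α) (γ : ℝ) :
    ContinuousOn (fun t => t ^ γ * hf x α t) (Set.Ioi (0:ℝ)) := by
  intro t ht
  have h1 : ContinuousAt (fun t : ℝ => t ^ γ) t :=
    Real.continuousAt_rpow_const t γ (Or.inl (ne_of_gt ht))
  exact ((h1.mul (hf_continuousAt hx0 hαpos (le_of_lt ht)))).continuousWithinAt

lemma hf_le (hx0 : 0 < x) (hx1 : x < 1) (hzs : 0 < zstar)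
    (hmin : ∀ y ∈ Set.Ioi (0:ℝ), Real.Gamma zstar ≤ Real.Gamma y)
    (hαpos : 0 < α) {t : ℝ} (ht : 0 ≤ t) :
    hf x α t ≤ x ^ α / Real.Gamma zstar := by
  have h1 : x ^ (t + α) ≤ x ^ α := by
    rw [Real.rpow_add hx0]
    have h2 : x ^ t ≤ 1 := Real.rpow_le_one hx0.le hx1.le ht
    nlinarith [Real.rpow_pos_of_pos hx0 α, Real.rpow_pos_of_pos hx0 t]
  have h2 : Real.Gamma zstar ≤ Real.Gamma (t + α + 1) :=
    hmin _ (by simp only [Set.mem_Ioi]; linarith)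
  exact div_le_div₀ (Real.rpow_pos_of_pos hx0 α).le h1 (Real.Gamma_pos_of_pos hzs) h2

/-- Monotonicity of `Γ` to the right of its minimum point. -/
lemma Gamma_mono (hzs : 0 < zstar)
    (hmin : ∀ y ∈ Set.Ioi (0:ℝ), Real.Gamma zstar ≤ Real.Gamma y)
    {u v : ℝ} (hu : zstar ≤ u) (huv : u ≤ v) : Real.Gamma u ≤ Real.Gamma v := by
  rcases eq_or_lt_of_le hu with rfl | hu'
  · exact hmin v (Set.mem_Ioi.2 (lt_of_lt_of_le hzs huv))
  rcases eq_or_lt_of_le huv with rfl | huv'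
  · exact le_rfl
  have hv : zstar < v := lt_trans hu' huv'
  have hden : 0 < v - zstar := by linarith
  have ha0 : 0 ≤ (v - u) / (v - zstar) := div_nonneg (by linarith) hden.le
  have hb0 : 0 < (u - zstar) / (v - zstar) := div_pos (by linarith) hden
  have hab : (v - u) / (v - zstar) + (u - zstar) / (v - zstar) = 1 := by
    rw [← add_div, div_eq_one_iff_eq hden.ne']; ring
  have hcomb : ((v - u) / (v - zstar)) * zstar + ((u - zstar) / (v - zstar)) * v = u := by
    field_simp
    ring
  have hcvx := Real.convexOn_log_Gamma.2 (Set.mem_Ioi.2 hzs)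
    (Set.mem_Ioi.2 (lt_trans hzs hv)) ha0 hb0.le hab
  simp only [smul_eq_mul, Function.comp_apply] at hcvx
  rw [hcomb] at hcvx
  have hGu : 0 < Real.Gamma u := Real.Gamma_pos_of_pos (lt_trans hzs hu')
  have hGv : 0 < Real.Gamma v := Real.Gamma_pos_of_pos (lt_trans hzs hv)
  have hGz : 0 < Real.Gamma zstar := Real.Gamma_pos_of_pos hzs
  have hzu : Real.log (Real.Gamma zstar) ≤ Real.log (Real.Gamma u) :=
    Real.log_le_log hGz (hmin u (Set.mem_Ioi.2 (lt_trans hzs hu')))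
  have hmul := mul_le_mul_of_nonneg_left hzu ha0
  have h4 : (v - u) / (v - zstar) * Real.log (Real.Gamma u) +
      (u - zstar) / (v - zstar) * Real.log (Real.Gamma u) = Real.log (Real.Gamma u) := by
    rw [← add_mul, hab, one_mul]
  have hkey : (u - zstar) / (v - zstar) * Real.log (Real.Gamma u) ≤
      (u - zstar) / (v - zstar) * Real.log (Real.Gamma v) := by linarith
  have h3 : Real.log (Real.Gamma u) ≤ Real.log (Real.Gamma v) :=
    (mul_le_mul_iff_right₀ hb0).1 hkey
  exact (Real.log_le_log_iff hGu hGv).1 h3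

/-- Four-point inequality for `Γ` coming from convexity of `log Γ`. -/
lemma Gamma_four (hzs : 0 < zstar)
    (hmin : ∀ y ∈ Set.Ioi (0:ℝ), Real.Gamma zstar ≤ Real.Gamma y)
    {p q r w : ℝ} (hzp : zstar ≤ p) (hpq : p ≤ q) (hpr : p ≤ r)
    (hsum : q + r ≤ p + w) :
    Real.Gamma q * Real.Gamma r ≤ Real.Gamma p * Real.Gamma w := by
  have hp0 : 0 < p := lt_of_lt_of_le hzs hzp
  have hq0 : 0 < q := lt_of_lt_of_le hp0 hpq
  have hr0 : 0 < r := lt_of_lt_of_le hp0 hpr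
  have hqD : q ≤ q + r - p := by linarith
  have hrD : r ≤ q + r - p := by linarith
  have hDw : q + r - p ≤ w := by linarith
  have hD0 : 0 < q + r - p := lt_of_lt_of_le hq0 hqD
  have hw0 : 0 < w := lt_of_lt_of_le hD0 hDw
  have step2 : Real.Gamma (q + r - p) ≤ Real.Gamma w :=
    Gamma_mono hzs hmin (le_trans hzp (le_trans hpq hqD)) hDw
  have step1 : Real.Gamma q * Real.Gamma r ≤ Real.Gamma p * Real.Gamma (q + r - p) := by
    rcases eq_or_lt_of_le hpq with rfl | hpq'
    · have hDr : p + r - p = r := by ring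
      rw [hDr]
    · have hpD : p < q + r - p := by linarith
      have hden : 0 < (q + r - p) - p := by linarith
      have ha0 : 0 ≤ ((q + r - p) - q) / ((q + r - p) - p) := div_nonneg (by linarith) hden.le
      have hb0 : 0 ≤ (q - p) / ((q + r - p) - p) := div_nonneg (by linarith) hden.le
      have hab : ((q + r - p) - q) / ((q + r - p) - p) + (q - p) / ((q + r - p) - p) = 1 := by
        rw [← add_div, div_eq_one_iff_eq hden.ne']; ring
      have hab' : (q - p) / ((q + r - p) - p) + ((q + r - p) - q) / ((q + r - p) - p) = 1 := by
        rw [add_comm]; exact hab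
      have hq_comb : (((q + r - p) - q) / ((q + r - p) - p)) * p +
          ((q - p) / ((q + r - p) - p)) * (q + r - p) = q := by
        field_simp
        ring
      have hr_comb : ((q - p) / ((q + r - p) - p)) * p +
          (((q + r - p) - q) / ((q + r - p) - p)) * (q + r - p) = r := by
        field_simp
        ring
      have h1 := Real.convexOn_log_Gamma.2 (Set.mem_Ioi.2 hp0) (Set.mem_Ioi.2 hD0) ha0 hb0 hab
      have h2 := Real.convexOn_log_Gamma.2 (Set.mem_Ioi.2 hp0) (Set.mem_Ioi.2 hD0) hb0 ha0 hab'
      simp only [smul_eq_mul, Function.comp_apply] at h1 h2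
      rw [hq_comb] at h1
      rw [hr_comb] at h2
      have hGp : 0 < Real.Gamma p := Real.Gamma_pos_of_pos hp0
      have hGq : 0 < Real.Gamma q := Real.Gamma_pos_of_pos hq0
      have hGr : 0 < Real.Gamma r := Real.Gamma_pos_of_pos hr0
      have hGD : 0 < Real.Gamma (q + r - p) := Real.Gamma_pos_of_pos hD0
      have h4p : ((q + r - p) - q) / ((q + r - p) - p) * Real.log (Real.Gamma p) +
          (q - p) / ((q + r - p) - p) * Real.log (Real.Gamma p) = Real.log (Real.Gamma p) := by
        rw [← add_mul, hab, one_mul]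
      have h4D : ((q + r - p) - q) / ((q + r - p) - p) * Real.log (Real.Gamma (q + r - p)) +
          (q - p) / ((q + r - p) - p) * Real.log (Real.Gamma (q + r - p)) =
          Real.log (Real.Gamma (q + r - p)) := by
        rw [← add_mul, hab, one_mul]
      have hlog : Real.log (Real.Gamma q) + Real.log (Real.Gamma r) ≤
          Real.log (Real.Gamma p) + Real.log (Real.Gamma (q + r - p)) := by linarith
      have hexp := Real.exp_le_exp.2 hlog
      rwa [Real.exp_add, Real.exp_add, Real.exp_log hGq, Real.exp_log hGr, Real.exp_log hGp,
        Real.exp_log hGD] at hexp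
  calc Real.Gamma q * Real.Gamma r ≤ Real.Gamma p * Real.Gamma (q + r - p) := step1
    _ ≤ Real.Gamma p * Real.Gamma w :=
        mul_le_mul_of_nonneg_left step2 (Real.Gamma_pos_of_pos hp0).le

/-- The TP₂ property of `hf`. -/
lemma hf_TP (hx0 : 0 < x) (hx1 : x < 1) (hzs : 0 < zstar)
    (hmin : ∀ y ∈ Set.Ioi (0:ℝ), Real.Gamma zstar ≤ Real.Gamma y) (hα : zstar < α)
    {u r r' : ℝ} (hu0 : 0 < u) (hu1 : u ≤ 1) (hr : 0 < r) (hrr' : r ≤ r') :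
    hf x α (u * r) * hf x α r' ≤ hf x α (u * r') * hf x α r := by
  have hαpos : 0 < α := lt_trans hzs hα
  unfold hf
  rw [div_mul_div_comm, div_mul_div_comm]
  have hnum : x ^ (u * r + α) * x ^ (r' + α) ≤ x ^ (u * r' + α) * x ^ (r + α) := by
    rw [← Real.rpow_add hx0, ← Real.rpow_add hx0]
    apply Real.rpow_le_rpow_of_exponent_ge hx0 hx1.le
    nlinarith [mul_nonneg (sub_nonneg.2 hu1) (sub_nonneg.2 hrr')]
  have hden : Real.Gamma (u * r' + α + 1) * Real.Gamma (r + α + 1) ≤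
      Real.Gamma (u * r + α + 1) * Real.Gamma (r' + α + 1) := by
    apply Gamma_four hzs hmin (p := u * r + α + 1) (w := r' + α + 1)
    · nlinarith
    · nlinarith
    · nlinarith
    · nlinarith [mul_nonneg (sub_nonneg.2 hu1) (sub_nonneg.2 hrr')]
  exact div_le_div₀ (by positivity) hnum
    (mul_pos (Real.Gamma_pos_of_pos (by nlinarith)) (Real.Gamma_pos_of_pos (by nlinarith))) hden

end Basic

section Integrab

variable {x α zstar : ℝ}

/-- Helper: integrability on `(0, c]` by domination with a power. -/
lemma integrableOn_Ioc_dom {f : ℝ → ℝ} {γ B c : ℝ} (hγ : -1 < γ)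
    (hcont : ContinuousOn f (Set.Ioc 0 c))
    (hbd : ∀ t ∈ Set.Ioc (0:ℝ) c, |f t| ≤ B * t ^ γ) :
    IntegrableOn f (Set.Ioc 0 c) := by
  rcases le_or_gt c 0 with hc | hc
  · rw [Set.Ioc_eq_empty (by exact fun h => absurd hc (not_le.2 h))]
    exact integrableOn_empty
  have hrint : IntegrableOn (fun t : ℝ => B * t ^ γ) (Set.Ioc 0 c) := by
    have h0 := intervalIntegral.intervalIntegrable_rpow' (a := 0) (b := c) hγ
    rw [intervalIntegrable_iff_integrableOn_Ioc_of_le hc.le] at h0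
    exact h0.const_mul B
  refine Integrable.mono' hrint (hcont.aestronglyMeasurable measurableSet_Ioc) ?_
  refine (ae_restrict_iff' measurableSet_Ioc).2 (ae_of_all _ ?_)
  intro t ht
  rw [Real.norm_eq_abs]
  exact hbd t ht

lemma integrableOn_Ioc_f (hx0 : 0 < x) (hx1 : x < 1) (hzs : 0 < zstar)
    (hmin : ∀ y ∈ Set.Ioi (0:ℝ), Real.Gamma zstar ≤ Real.Gamma y) (hα : zstar < α)
    {γ : ℝ} (hγ : -1 < γ) (c : ℝ) :
    IntegrableOn (fun t => t ^ γ * hf x α t) (Set.Ioc 0 c) := by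
  have hαpos : 0 < α := lt_trans hzs hα
  refine integrableOn_Ioc_dom (B := x ^ α / Real.Gamma zstar) hγ
    ((continuousOn_integrand hx0 hαpos γ).mono Set.Ioc_subset_Ioi_self) ?_
  intro t ht
  have h1 : 0 < hf x α t := hf_pos hx0 hαpos ht.1.le
  have h2 : hf x α t ≤ x ^ α / Real.Gamma zstar := hf_le hx0 hx1 hzs hmin hαpos ht.1.le
  have h3 : (0:ℝ) ≤ t ^ γ := Real.rpow_nonneg ht.1.le γ
  rw [abs_of_nonneg (mul_nonneg h3 h1.le)]
  calc t ^ γ * hf x α t ≤ t ^ γ * (x ^ α / Real.Gamma zstar) :=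
        mul_le_mul_of_nonneg_left h2 h3
    _ = x ^ α / Real.Gamma zstar * t ^ γ := mul_comm _ _

lemma integrableOn_Ioi_f (hx0 : 0 < x) (hx1 : x < 1) (hzs : 0 < zstar)
    (hmin : ∀ y ∈ Set.Ioi (0:ℝ), Real.Gamma zstar ≤ Real.Gamma y) (hα : zstar < α)
    {γ : ℝ} (hγ : -1 < γ) :
    IntegrableOn (fun t => t ^ γ * hf x α t) (Set.Ioi 0) := by
  have hαpos : 0 < α := lt_trans hzs hα
  have hsplit : Set.Ioc (0:ℝ) 1 ∪ Set.Ioi (1:ℝ) = Set.Ioi 0 :=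
    Set.Ioc_union_Ioi_eq_Ioi zero_le_one
  rw [← hsplit]
  refine (integrableOn_Ioc_f hx0 hx1 hzs hmin hα hγ 1).union ?_
  have hb : 0 < -Real.log x := by
    have := Real.log_neg hx0 hx1
    linarith
  have hdom : IntegrableOn
      (fun t : ℝ => x ^ α / Real.Gamma zstar * (t ^ γ * Real.exp (-(-Real.log x) * t)))
      (Set.Ioi 1) := by
    have h0 : IntegrableOn (fun t : ℝ => t ^ γ * Real.exp (-(-Real.log x) * t ^ (1:ℝ)))
        (Set.Ioi 0) := integrableOn_rpow_mul_exp_neg_mul_rpow hγ zero_lt_one hb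
    have h1 : IntegrableOn (fun t : ℝ => t ^ γ * Real.exp (-(-Real.log x) * t))
        (Set.Ioi 0) := by
      refine (integrableOn_congr_fun (fun t ht => ?_) measurableSet_Ioi).2 h0
      rw [Real.rpow_one]
    exact ((h1.mono_set (Set.Ioi_subset_Ioi zero_le_one)).const_mul _)
  refine Integrable.mono' hdom
    (((continuousOn_integrand hx0 hαpos γ).mono (Set.Ioi_subset_Ioi zero_le_one)).aestronglyMeasurable
      measurableSet_Ioi) ?_
  refine (ae_restrict_iff' measurableSet_Ioi).2 (ae_of_all _ ?_)
  intro t ht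
  have ht0 : (0:ℝ) < t := lt_trans one_pos ht
  have h1 : 0 < hf x α t := hf_pos hx0 hαpos ht0.le
  have h3 : (0:ℝ) ≤ t ^ γ := Real.rpow_nonneg ht0.le γ
  rw [Real.norm_eq_abs, abs_of_nonneg (mul_nonneg h3 h1.le)]
  have hGam : Real.Gamma zstar ≤ Real.Gamma (t + α + 1) :=
    hmin _ (Set.mem_Ioi.2 (by linarith))
  have hhf : hf x α t ≤ x ^ α / Real.Gamma zstar * Real.exp (-(-Real.log x) * t) := by
    have e1 : hf x α t ≤ x ^ (t + α) / Real.Gamma zstar := by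
      unfold hf
      exact div_le_div_of_nonneg_left (Real.rpow_pos_of_pos hx0 _).le
        (Real.Gamma_pos_of_pos hzs) hGam
    have e2 : x ^ (t + α) = x ^ α * Real.exp (-(-Real.log x) * t) := by
      rw [Real.rpow_add hx0, Real.rpow_def_of_pos hx0 t]
      ring_nf
    rw [e2] at e1
    calc hf x α t ≤ x ^ α * Real.exp (-(-Real.log x) * t) / Real.Gamma zstar := e1
      _ = x ^ α / Real.Gamma zstar * Real.exp (-(-Real.log x) * t) := by ring
  calc t ^ γ * hf x α t
      ≤ t ^ γ * (x ^ α / Real.Gamma zstar * Real.exp (-(-Real.log x) * t)) :=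
        mul_le_mul_of_nonneg_left hhf h3
    _ = x ^ α / Real.Gamma zstar * (t ^ γ * Real.exp (-(-Real.log x) * t)) := by ring

lemma Jf_nonneg (hx0 : 0 < x) (hαpos : 0 < α) (γ c : ℝ) : 0 ≤ Jf x α γ c :=
  setIntegral_nonneg measurableSet_Ioc fun t ht =>
    mul_nonneg (Real.rpow_nonneg ht.1.le γ) (hf_pos hx0 hαpos ht.1.le).le

lemma Jf_pos (hx0 : 0 < x) (hx1 : x < 1) (hzs : 0 < zstar)
    (hmin : ∀ y ∈ Set.Ioi (0:ℝ), Real.Gamma zstar ≤ Real.Gamma y) (hα : zstar < α)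
    {γ : ℝ} (hγ : -1 < γ) {c : ℝ} (hc : 0 < c) : 0 < Jf x α γ c := by
  have hαpos : 0 < α := lt_trans hzs hα
  rw [Jf, ← intervalIntegral.integral_of_le hc.le]
  refine intervalIntegral.intervalIntegral_pos_of_pos_on ?_ ?_ hc
  · rw [intervalIntegrable_iff_integrableOn_Ioc_of_le hc.le]
    exact integrableOn_Ioc_f hx0 hx1 hzs hmin hα hγ c
  · intro t ht
    exact mul_pos (Real.rpow_pos_of_pos ht.1 γ) (hf_pos hx0 hαpos ht.1.le)

lemma Jf_le_Jinf (hx0 : 0 < x) (hx1 : x < 1) (hzs : 0 < zstar)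
    (hmin : ∀ y ∈ Set.Ioi (0:ℝ), Real.Gamma zstar ≤ Real.Gamma y) (hα : zstar < α)
    {γ : ℝ} (hγ : -1 < γ) (c : ℝ) : Jf x α γ c ≤ Jinf x α γ := by
  have hαpos : 0 < α := lt_trans hzs hα
  refine setIntegral_mono_set (integrableOn_Ioi_f hx0 hx1 hzs hmin hα hγ) ?_ ?_
  · refine (ae_restrict_iff' measurableSet_Ioi).2 (ae_of_all _ ?_)
    intro t ht
    exact mul_nonneg (Real.rpow_nonneg (le_of_lt ht) γ) (hf_pos hx0 hαpos (le_of_lt ht)).le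
  · exact HasSubset.Subset.eventuallyLE Set.Ioc_subset_Ioi_self

lemma Jinf_pos (hx0 : 0 < x) (hx1 : x < 1) (hzs : 0 < zstar)
    (hmin : ∀ y ∈ Set.Ioi (0:ℝ), Real.Gamma zstar ≤ Real.Gamma y) (hα : zstar < α)
    {γ : ℝ} (hγ : -1 < γ) : 0 < Jinf x α γ :=
  lt_of_lt_of_le (Jf_pos hx0 hx1 hzs hmin hα hγ one_pos)
    (Jf_le_Jinf hx0 hx1 hzs hmin hα hγ 1)

/-- Power-law upper bound for `Jf`. -/
lemma Jf_le (hx0 : 0 < x) (hx1 : x < 1) (hzs : 0 < zstar)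
    (hmin : ∀ y ∈ Set.Ioi (0:ℝ), Real.Gamma zstar ≤ Real.Gamma y) (hα : zstar < α)
    {γ : ℝ} (hγ : -1 < γ) {c : ℝ} (hc : 0 < c) :
    Jf x α γ c ≤ (x ^ α / Real.Gamma zstar) / (γ + 1) * c ^ (γ + 1) := by
  have hαpos : 0 < α := lt_trans hzs hα
  have hγ1 : (0:ℝ) < γ + 1 := by linarith
  have h1 : Jf x α γ c ≤ ∫ t in Set.Ioc (0:ℝ) c, x ^ α / Real.Gamma zstar * t ^ γ := by
    refine setIntegral_mono_on (integrableOn_Ioc_f hx0 hx1 hzs hmin hα hγ c) ?_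
      measurableSet_Ioc ?_
    · have h0 := intervalIntegral.intervalIntegrable_rpow' (a := 0) (b := c) hγ
      rw [intervalIntegrable_iff_integrableOn_Ioc_of_le hc.le] at h0
      exact h0.const_mul _
    · intro t ht
      have h3 : (0:ℝ) ≤ t ^ γ := Real.rpow_nonneg ht.1.le γ
      calc t ^ γ * hf x α t ≤ t ^ γ * (x ^ α / Real.Gamma zstar) :=
            mul_le_mul_of_nonneg_left (hf_le hx0 hx1 hzs hmin hαpos ht.1.le) h3
        _ = x ^ α / Real.Gamma zstar * t ^ γ := mul_comm _ _
  have h2 : ∫ t in Set.Ioc (0:ℝ) c, x ^ α / Real.Gamma zstar * t ^ γ =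
      x ^ α / Real.Gamma zstar * (c ^ (γ + 1) / (γ + 1)) := by
    rw [← intervalIntegral.integral_of_le hc.le, intervalIntegral.integral_const_mul,
      integral_rpow (Or.inl hγ), Real.zero_rpow hγ1.ne', sub_zero]
  rw [h2] at h1
  calc Jf x α γ c ≤ x ^ α / Real.Gamma zstar * (c ^ (γ + 1) / (γ + 1)) := h1
    _ = (x ^ α / Real.Gamma zstar) / (γ + 1) * c ^ (γ + 1) := by ring

/-- FTC for set primitives over `(0, u]`. -/
lemma hasDerivAt_setPrimitive {f : ℝ → ℝ} {c : ℝ} (hc : 0 < c)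
    (hcont : ContinuousOn f (Set.Ioi 0)) (hint : IntegrableOn f (Set.Ioc 0 c)) :
    HasDerivAt (fun u => ∫ t in Set.Ioc (0:ℝ) u, f t) (f c) c := by
  have hii : IntervalIntegrable f volume 0 c := by
    rw [intervalIntegrable_iff_integrableOn_Ioc_of_le hc.le]
    exact hint
  have hmeas : StronglyMeasurableAtFilter f (𝓝 c) volume :=
    ContinuousOn.stronglyMeasurableAtFilter isOpen_Ioi hcont c hc
  have hct : ContinuousAt f c := hcont.continuousAt (Ioi_mem_nhds hc)
  have h := intervalIntegral.integral_hasDerivAt_right hii hmeas hct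
  refine h.congr_of_eventuallyEq ?_
  refine Filter.eventuallyEq_of_mem (Ioi_mem_nhds hc) ?_
  intro u hu
  exact (intervalIntegral.integral_of_le (le_of_lt hu)).symm

lemma hasDerivAt_Jf (hx0 : 0 < x) (hx1 : x < 1) (hzs : 0 < zstar)
    (hmin : ∀ y ∈ Set.Ioi (0:ℝ), Real.Gamma zstar ≤ Real.Gamma y) (hα : zstar < α)
    {γ : ℝ} (hγ : -1 < γ) {c : ℝ} (hc : 0 < c) :
    HasDerivAt (Jf x α γ) (c ^ γ * hf x α c) c := by
  have hαpos : 0 < α := lt_trans hzs hα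
  exact hasDerivAt_setPrimitive hc (continuousOn_integrand hx0 hαpos γ)
    (integrableOn_Ioc_f hx0 hx1 hzs hmin hα hγ c)

end Integrab


section Scale

variable {x α zstar : ℝ}

lemma Jf_scale (hx0 : 0 < x) (hαpos : 0 < α) {γ σ r : ℝ} (hσ0 : 0 < σ) (hr : 0 < r) :
    Jf x α γ (σ * r) = σ ^ (γ + 1) * ∫ u in Set.Ioc (0:ℝ) r, u ^ γ * hf x α (σ * u) := by
  have key := MeasureTheory.Measure.integral_comp_mul_left
    ((Set.Ioc (0:ℝ) (σ * r)).indicator (fun t => t ^ γ * hf x α t)) σ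
  have h1 : ∫ t, (Set.Ioc (0:ℝ) (σ * r)).indicator (fun t => t ^ γ * hf x α t) t =
      Jf x α γ (σ * r) := by
    rw [MeasureTheory.integral_indicator measurableSet_Ioc]; rfl
  have h2 : (fun u : ℝ => (Set.Ioc (0:ℝ) (σ * r)).indicator
      (fun t => t ^ γ * hf x α t) (σ * u)) =
      (Set.Ioc (0:ℝ) r).indicator (fun u => (σ * u) ^ γ * hf x α (σ * u)) := by
    funext u
    by_cases hu : u ∈ Set.Ioc (0:ℝ) r
    · have hmem : σ * u ∈ Set.Ioc (0:ℝ) (σ * r) :=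
        ⟨mul_pos hσ0 hu.1, mul_le_mul_of_nonneg_left hu.2 hσ0.le⟩
      rw [Set.indicator_of_mem hmem, Set.indicator_of_mem hu]
    · have hmem : σ * u ∉ Set.Ioc (0:ℝ) (σ * r) := by
        intro hmem
        refine hu ⟨?_, ?_⟩
        · by_contra hneg
          push_neg at hneg
          have := mul_nonpos_of_nonneg_of_nonpos hσ0.le hneg
          linarith [hmem.1]
        · exact le_of_mul_le_mul_left hmem.2 hσ0
      rw [Set.indicator_of_notMem hmem, Set.indicator_of_notMem hu]
  rw [h2, h1] at key
  rw [MeasureTheory.integral_indicator measurableSet_Ioc] at key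
  -- key : ∫ u in Ioc 0 r, (σ*u)^γ * hf (σ*u) = |σ⁻¹| • Jf x α γ (σ*r)
  have h3 : ∫ u in Set.Ioc (0:ℝ) r, (σ * u) ^ γ * hf x α (σ * u) =
      σ ^ γ * ∫ u in Set.Ioc (0:ℝ) r, u ^ γ * hf x α (σ * u) := by
    rw [← MeasureTheory.integral_const_mul]
    refine setIntegral_congr_fun measurableSet_Ioc ?_
    intro u hu
    dsimp only
    rw [Real.mul_rpow hσ0.le hu.1.le]
    ring
  rw [h3] at key
  have habs : |σ⁻¹| = σ⁻¹ := abs_of_pos (inv_pos.2 hσ0)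
  rw [habs, smul_eq_mul] at key
  have : Jf x α γ (σ * r) = σ * (σ ^ γ * ∫ u in Set.Ioc (0:ℝ) r, u ^ γ * hf x α (σ * u)) := by
    rw [key]
    field_simp
  rw [this, Real.rpow_add_one hσ0.ne']
  ring

lemma integrableOn_shifted (hx0 : 0 < x) (hx1 : x < 1) (hzs : 0 < zstar)
    (hmin : ∀ y ∈ Set.Ioi (0:ℝ), Real.Gamma zstar ≤ Real.Gamma y) (hα : zstar < α)
    {γ σ : ℝ} (hγ : -1 < γ) (hσ0 : 0 < σ) (c : ℝ) :
    IntegrableOn (fun u => u ^ γ * hf x α (σ * u)) (Set.Ioc 0 c) := by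
  have hαpos : 0 < α := lt_trans hzs hα
  refine integrableOn_Ioc_dom (B := x ^ α / Real.Gamma zstar) hγ ?_ ?_
  · intro u hu
    have h1 : ContinuousAt (fun u : ℝ => u ^ γ) u :=
      Real.continuousAt_rpow_const u γ (Or.inl (ne_of_gt hu.1))
    have h2 : ContinuousAt (fun u : ℝ => hf x α (σ * u)) u := by
      have := (hf_continuousAt hx0 hαpos (mul_pos hσ0 hu.1).le).comp
        (x := u) (continuous_const.mul continuous_id).continuousAt
      exact this
    exact (h1.mul h2).continuousWithinAt
  · intro u hu
    have h1 : 0 < hf x α (σ * u) := hf_pos hx0 hαpos (mul_pos hσ0 hu.1).le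
    have h3 : (0:ℝ) ≤ u ^ γ := Real.rpow_nonneg hu.1.le γ
    rw [abs_of_nonneg (mul_nonneg h3 h1.le)]
    calc u ^ γ * hf x α (σ * u) ≤ u ^ γ * (x ^ α / Real.Gamma zstar) :=
          mul_le_mul_of_nonneg_left
            (hf_le hx0 hx1 hzs hmin hαpos (mul_pos hσ0 hu.1).le) h3
      _ = x ^ α / Real.Gamma zstar * u ^ γ := mul_comm _ _

/-- The ratio `c ↦ c^(γ+1) h(c) / J(c)` is antitone. -/
lemma Hratio_antitone (hx0 : 0 < x) (hx1 : x < 1) (hzs : 0 < zstar)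
    (hmin : ∀ y ∈ Set.Ioi (0:ℝ), Real.Gamma zstar ≤ Real.Gamma y) (hα : zstar < α)
    {γ : ℝ} (hγ : -1 < γ) {r r' : ℝ} (hr : 0 < r) (hrr' : r ≤ r') :
    r' ^ (γ + 1) * hf x α r' * Jf x α γ r ≤ r ^ (γ + 1) * hf x α r * Jf x α γ r' := by
  have hαpos : 0 < α := lt_trans hzs hα
  have hr' : 0 < r' := lt_of_lt_of_le hr hrr'
  set σ : ℝ := r / r' with hσ
  have hσ0 : 0 < σ := div_pos hr hr'
  have hσ1 : σ ≤ 1 := (div_le_one hr').2 hrr'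
  have hσr' : σ * r' = r := by rw [hσ]; exact div_mul_cancel₀ r hr'.ne'
  have hV : Jf x α γ r = σ ^ (γ + 1) * ∫ u in Set.Ioc (0:ℝ) r', u ^ γ * hf x α (σ * u) := by
    rw [← hσr']
    exact Jf_scale hx0 hαpos hσ0 hr'
  have hmono0 : (∫ u in Set.Ioc (0:ℝ) r', u ^ γ * hf x α (σ * u) * hf x α r') ≤
      ∫ u in Set.Ioc (0:ℝ) r', u ^ γ * hf x α u * hf x α r := by
    refine setIntegral_mono_on ?_ ?_ measurableSet_Ioc ?_
    · exact (integrableOn_shifted hx0 hx1 hzs hmin hα hγ hσ0 r').mul_const _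
    · exact (integrableOn_Ioc_f hx0 hx1 hzs hmin hα hγ r').mul_const _
    · intro u hu
      have htp : hf x α (σ * u) * hf x α r' ≤ hf x α (σ * r') * hf x α u :=
        hf_TP hx0 hx1 hzs hmin hα hσ0 hσ1 hu.1 hu.2
      rw [hσr'] at htp
      have h3 : (0:ℝ) ≤ u ^ γ := Real.rpow_nonneg hu.1.le γ
      calc u ^ γ * hf x α (σ * u) * hf x α r' = u ^ γ * (hf x α (σ * u) * hf x α r') := by ring
        _ ≤ u ^ γ * (hf x α r * hf x α u) := mul_le_mul_of_nonneg_left htp h3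
        _ = u ^ γ * hf x α u * hf x α r := by ring
  have hL : (∫ u in Set.Ioc (0:ℝ) r', u ^ γ * hf x α (σ * u) * hf x α r') =
      (∫ u in Set.Ioc (0:ℝ) r', u ^ γ * hf x α (σ * u)) * hf x α r' :=
    MeasureTheory.integral_mul_const _ _
  have hR : (∫ u in Set.Ioc (0:ℝ) r', u ^ γ * hf x α u * hf x α r) =
      Jf x α γ r' * hf x α r := by
    rw [MeasureTheory.integral_mul_const]
    rfl
  have hmono : (∫ u in Set.Ioc (0:ℝ) r', u ^ γ * hf x α (σ * u)) * hf x α r' ≤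
      Jf x α γ r' * hf x α r := by
    rw [← hL, ← hR]
    exact hmono0
  have hrfac : r ^ (γ + 1) = σ ^ (γ + 1) * r' ^ (γ + 1) := by
    rw [← Real.mul_rpow hσ0.le hr'.le, hσr']
  have hpos : (0:ℝ) ≤ σ ^ (γ + 1) * r' ^ (γ + 1) :=
    mul_nonneg (Real.rpow_nonneg hσ0.le _) (Real.rpow_nonneg hr'.le _)
  calc r' ^ (γ + 1) * hf x α r' * Jf x α γ r
      = σ ^ (γ + 1) * r' ^ (γ + 1) *
        ((∫ u in Set.Ioc (0:ℝ) r', u ^ γ * hf x α (σ * u)) * hf x α r') := by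
        rw [hV]; ring
    _ ≤ σ ^ (γ + 1) * r' ^ (γ + 1) * (Jf x α γ r' * hf x α r) :=
        mul_le_mul_of_nonneg_left hmono hpos
    _ = r ^ (γ + 1) * hf x α r * Jf x α γ r' := by rw [hrfac]; ring

end Scale


section IBP

variable {x α zstar : ℝ}

lemma integrableOn_K (hx0 : 0 < x) (hx1 : x < 1) (hzs : 0 < zstar)
    (hmin : ∀ y ∈ Set.Ioi (0:ℝ), Real.Gamma zstar ≤ Real.Gamma y) (hα : zstar < α)
    {bb d : ℝ} (hbb : -1 < bb) (hbd : -1 < bb + d) (c : ℝ) :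
    IntegrableOn (fun t => t ^ (d - 1) * Jf x α bb t) (Set.Ioc 0 c) := by
  have hαpos : 0 < α := lt_trans hzs hα
  refine integrableOn_Ioc_dom (B := x ^ α / Real.Gamma zstar / (bb + 1)) hbd ?_ ?_
  · intro t ht
    have h1 : ContinuousAt (fun t : ℝ => t ^ (d - 1)) t :=
      Real.continuousAt_rpow_const t _ (Or.inl (ne_of_gt ht.1))
    have h2 : ContinuousAt (Jf x α bb) t :=
      (hasDerivAt_Jf hx0 hx1 hzs hmin hα hbb ht.1).continuousAt
    exact (h1.mul h2).continuousWithinAt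
  · intro t ht
    have h0 : 0 ≤ Jf x α bb t := Jf_nonneg hx0 hαpos bb t
    have h1 : 0 ≤ t ^ (d - 1) := Real.rpow_nonneg ht.1.le _
    rw [abs_of_nonneg (mul_nonneg h1 h0)]
    have h2 := Jf_le hx0 hx1 hzs hmin hα hbb ht.1
    calc t ^ (d - 1) * Jf x α bb t
        ≤ t ^ (d - 1) * (x ^ α / Real.Gamma zstar / (bb + 1) * t ^ (bb + 1)) :=
          mul_le_mul_of_nonneg_left h2 h1
      _ = x ^ α / Real.Gamma zstar / (bb + 1) * (t ^ (d - 1) * t ^ (bb + 1)) := by ring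
      _ = x ^ α / Real.Gamma zstar / (bb + 1) * t ^ (bb + d) := by
          rw [← Real.rpow_add ht.1, show d - 1 + (bb + 1) = bb + d from by ring]

lemma K_nonneg (hx0 : 0 < x) (hαpos : 0 < α) (bb d u : ℝ) :
    0 ≤ ∫ t in Set.Ioc (0:ℝ) u, t ^ (d - 1) * Jf x α bb t :=
  setIntegral_nonneg measurableSet_Ioc fun t ht =>
    mul_nonneg (Real.rpow_nonneg ht.1.le _) (Jf_nonneg hx0 hαpos bb t)

lemma K_bound (hx0 : 0 < x) (hx1 : x < 1) (hzs : 0 < zstar)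
    (hmin : ∀ y ∈ Set.Ioi (0:ℝ), Real.Gamma zstar ≤ Real.Gamma y) (hα : zstar < α)
    {bb d : ℝ} (hbb : -1 < bb) (hbd : -1 < bb + d) {u : ℝ} (hu : 0 < u) :
    ∫ t in Set.Ioc (0:ℝ) u, t ^ (d - 1) * Jf x α bb t ≤
      x ^ α / Real.Gamma zstar / (bb + 1) / (bb + d + 1) * u ^ (bb + d + 1) := by
  have hαpos : 0 < α := lt_trans hzs hα
  have hp : (0:ℝ) < bb + d + 1 := by linarith
  have h1 : ∫ t in Set.Ioc (0:ℝ) u, t ^ (d - 1) * Jf x α bb t ≤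
      ∫ t in Set.Ioc (0:ℝ) u, x ^ α / Real.Gamma zstar / (bb + 1) * t ^ (bb + d) := by
    refine setIntegral_mono_on (integrableOn_K hx0 hx1 hzs hmin hα hbb hbd u) ?_
      measurableSet_Ioc ?_
    · have h0 := intervalIntegral.intervalIntegrable_rpow' (a := 0) (b := u) hbd
      rw [intervalIntegrable_iff_integrableOn_Ioc_of_le hu.le] at h0
      exact h0.const_mul _
    · intro t ht
      have h1 : 0 ≤ t ^ (d - 1) := Real.rpow_nonneg ht.1.le _
      calc t ^ (d - 1) * Jf x α bb t
          ≤ t ^ (d - 1) * (x ^ α / Real.Gamma zstar / (bb + 1) * t ^ (bb + 1)) :=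
            mul_le_mul_of_nonneg_left (Jf_le hx0 hx1 hzs hmin hα hbb ht.1) h1
        _ = x ^ α / Real.Gamma zstar / (bb + 1) * (t ^ (d - 1) * t ^ (bb + 1)) := by ring
        _ = x ^ α / Real.Gamma zstar / (bb + 1) * t ^ (bb + d) := by
            rw [← Real.rpow_add ht.1, show d - 1 + (bb + 1) = bb + d from by ring]
  have h2 : ∫ t in Set.Ioc (0:ℝ) u, x ^ α / Real.Gamma zstar / (bb + 1) * t ^ (bb + d) =
      x ^ α / Real.Gamma zstar / (bb + 1) * (u ^ (bb + d + 1) / (bb + d + 1)) := by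
    rw [← intervalIntegral.integral_of_le hu.le, intervalIntegral.integral_const_mul,
      integral_rpow (Or.inl hbd), Real.zero_rpow hp.ne', sub_zero]
  rw [h2] at h1
  calc ∫ t in Set.Ioc (0:ℝ) u, t ^ (d - 1) * Jf x α bb t
      ≤ x ^ α / Real.Gamma zstar / (bb + 1) * (u ^ (bb + d + 1) / (bb + d + 1)) := h1
    _ = x ^ α / Real.Gamma zstar / (bb + 1) / (bb + d + 1) * u ^ (bb + d + 1) := by ring

/-- Integration by parts identity. -/
lemma ibp (hx0 : 0 < x) (hx1 : x < 1) (hzs : 0 < zstar)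
    (hmin : ∀ y ∈ Set.Ioi (0:ℝ), Real.Gamma zstar ≤ Real.Gamma y) (hα : zstar < α)
    {bb d : ℝ} (hbb : -1 < bb) (hbd : -1 < bb + d) {c : ℝ} (hc : 0 < c) :
    Jf x α (bb + d) c = c ^ d * Jf x α bb c
      - d * ∫ t in Set.Ioc (0:ℝ) c, t ^ (d - 1) * Jf x α bb t := by
  have hαpos : 0 < α := lt_trans hzs hα
  set CC : ℝ := x ^ α / Real.Gamma zstar with hCC
  have hCC0 : 0 < CC := div_pos (Real.rpow_pos_of_pos hx0 α) (Real.Gamma_pos_of_pos hzs)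
  set p : ℝ := bb + d + 1 with hp
  have hp0 : (0:ℝ) < p := by simp only [hp]; linarith
  set F : ℝ → ℝ := fun u => Jf x α (bb + d) u -
    (u ^ d * Jf x α bb u - d * ∫ t in Set.Ioc (0:ℝ) u, t ^ (d - 1) * Jf x α bb t) with hF
  have hF' : ∀ u ∈ Set.Ioi (0:ℝ), HasDerivAt F 0 u := by
    intro u hu
    rw [Set.mem_Ioi] at hu
    have h1 : HasDerivAt (fun u : ℝ => u ^ d) (d * u ^ (d - 1)) u :=
      Real.hasDerivAt_rpow_const (Or.inl hu.ne')
    have h2 : HasDerivAt (Jf x α bb) (u ^ bb * hf x α u) u :=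
      hasDerivAt_Jf hx0 hx1 hzs hmin hα hbb hu
    have h3 : HasDerivAt (fun u => ∫ t in Set.Ioc (0:ℝ) u, t ^ (d - 1) * Jf x α bb t)
        (u ^ (d - 1) * Jf x α bb u) u := by
      refine hasDerivAt_setPrimitive hu ?_ (integrableOn_K hx0 hx1 hzs hmin hα hbb hbd u)
      intro t ht
      have g1 : ContinuousAt (fun t : ℝ => t ^ (d - 1)) t :=
        Real.continuousAt_rpow_const t _ (Or.inl (ne_of_gt ht))
      have g2 : ContinuousAt (Jf x α bb) t :=
        (hasDerivAt_Jf hx0 hx1 hzs hmin hα hbb ht).continuousAt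
      exact (g1.mul g2).continuousWithinAt
    have h4 : HasDerivAt (Jf x α (bb + d)) (u ^ (bb + d) * hf x α u) u :=
      hasDerivAt_Jf hx0 hx1 hzs hmin hα hbd hu
    have h5 := h4.sub ((h1.mul h2).sub (h3.const_mul d))
    have heq : u ^ (bb + d) * hf x α u -
        (d * u ^ (d - 1) * Jf x α bb u + u ^ d * (u ^ bb * hf x α u)
          - d * (u ^ (d - 1) * Jf x α bb u)) = 0 := by
      rw [Real.rpow_add hu]
      ring
    rw [heq] at h5
    exact h5
  have hconst : ∀ u : ℝ, 0 < u → u ≤ c → F u = F c := by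
    have hcont : ContinuousOn F (Set.Ioi 0) := fun u hu => ((hF' u hu).continuousAt).continuousWithinAt
    have hdiff : DifferentiableOn ℝ F (interior (Set.Ioi (0:ℝ))) := by
      rw [interior_Ioi]
      exact fun u hu => (hF' u hu).differentiableAt.differentiableWithinAt
    have hderiv0 : ∀ u ∈ interior (Set.Ioi (0:ℝ)), deriv F u = 0 := by
      rw [interior_Ioi]
      exact fun u hu => (hF' u hu).deriv
    have hmono : MonotoneOn F (Set.Ioi 0) :=
      monotoneOn_of_deriv_nonneg (convex_Ioi 0) hcont hdiff
        (fun u hu => le_of_eq (hderiv0 u hu).symm)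
    have hanti : AntitoneOn F (Set.Ioi 0) :=
      antitoneOn_of_deriv_nonpos (convex_Ioi 0) hcont hdiff
        (fun u hu => le_of_eq (hderiv0 u hu))
    intro u hu huc
    exact le_antisymm (hmono (Set.mem_Ioi.2 hu) (Set.mem_Ioi.2 hc) huc)
      (hanti (Set.mem_Ioi.2 hu) (Set.mem_Ioi.2 hc) huc)
  have hbound : ∀ u : ℝ, 0 < u → ‖F u‖ ≤
      (CC / p + CC / (bb + 1) + |d| * (CC / (bb + 1) / p)) * u ^ p := by
    intro u hu
    have e1 : |Jf x α (bb + d) u| ≤ CC / p * u ^ p := by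
      rw [abs_of_nonneg (Jf_nonneg hx0 hαpos _ u)]
      have := Jf_le hx0 hx1 hzs hmin hα hbd hu
      calc Jf x α (bb + d) u ≤ CC / (bb + d + 1) * u ^ (bb + d + 1) := this
        _ = CC / p * u ^ p := by rw [hp]
    have e2 : |u ^ d * Jf x α bb u| ≤ CC / (bb + 1) * u ^ p := by
      rw [abs_of_nonneg (mul_nonneg (Real.rpow_nonneg hu.le d) (Jf_nonneg hx0 hαpos bb u))]
      calc u ^ d * Jf x α bb u ≤ u ^ d * (CC / (bb + 1) * u ^ (bb + 1)) :=
            mul_le_mul_of_nonneg_left (Jf_le hx0 hx1 hzs hmin hα hbb hu)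
              (Real.rpow_nonneg hu.le d)
        _ = CC / (bb + 1) * (u ^ d * u ^ (bb + 1)) := by ring
        _ = CC / (bb + 1) * u ^ p := by
            rw [← Real.rpow_add hu, show d + (bb + 1) = p from by rw [hp]; ring]
    have e3 : |d * ∫ t in Set.Ioc (0:ℝ) u, t ^ (d - 1) * Jf x α bb t| ≤
        |d| * (CC / (bb + 1) / p) * u ^ p := by
      rw [abs_mul, abs_of_nonneg (K_nonneg hx0 hαpos bb d u)]
      have hK := K_bound hx0 hx1 hzs hmin hα hbb hbd hu
      have h5 : |d| * (∫ t in Set.Ioc (0:ℝ) u, t ^ (d - 1) * Jf x α bb t) ≤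
          |d| * (CC / (bb + 1) / (bb + d + 1) * u ^ (bb + d + 1)) :=
        mul_le_mul_of_nonneg_left hK (abs_nonneg d)
      calc |d| * (∫ t in Set.Ioc (0:ℝ) u, t ^ (d - 1) * Jf x α bb t)
          ≤ |d| * (CC / (bb + 1) / (bb + d + 1) * u ^ (bb + d + 1)) := h5
        _ = |d| * (CC / (bb + 1) / p) * u ^ p := by rw [hp]; ring
    rw [Real.norm_eq_abs, hF]
    calc |Jf x α (bb + d) u -
        (u ^ d * Jf x α bb u - d * ∫ t in Set.Ioc (0:ℝ) u, t ^ (d - 1) * Jf x α bb t)|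
        ≤ |Jf x α (bb + d) u| +
          |u ^ d * Jf x α bb u - d * ∫ t in Set.Ioc (0:ℝ) u, t ^ (d - 1) * Jf x α bb t| :=
          abs_sub _ _
      _ ≤ |Jf x α (bb + d) u| + (|u ^ d * Jf x α bb u| +
          |d * ∫ t in Set.Ioc (0:ℝ) u, t ^ (d - 1) * Jf x α bb t|) := by
          have := abs_sub (u ^ d * Jf x α bb u)
            (d * ∫ t in Set.Ioc (0:ℝ) u, t ^ (d - 1) * Jf x α bb t)
          linarith
      _ ≤ CC / p * u ^ p + (CC / (bb + 1) * u ^ p + |d| * (CC / (bb + 1) / p) * u ^ p) := by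
          linarith
      _ = (CC / p + CC / (bb + 1) + |d| * (CC / (bb + 1) / p)) * u ^ p := by ring
  have htend0 : Tendsto F (nhdsWithin 0 (Set.Ioi 0)) (nhds 0) := by
    have hg : Tendsto (fun u : ℝ => (CC / p + CC / (bb + 1) + |d| * (CC / (bb + 1) / p)) * u ^ p)
        (nhdsWithin 0 (Set.Ioi 0)) (nhds 0) := by
      have h1 : ContinuousAt (fun u : ℝ => u ^ p) 0 :=
        Real.continuousAt_rpow_const 0 p (Or.inr hp0.le)
      have h2 : Tendsto (fun u : ℝ => u ^ p) (nhdsWithin 0 (Set.Ioi 0)) (nhds ((0:ℝ) ^ p)) :=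
        (h1.tendsto).mono_left nhdsWithin_le_nhds
      rw [Real.zero_rpow hp0.ne'] at h2
      have := h2.const_mul (CC / p + CC / (bb + 1) + |d| * (CC / (bb + 1) / p))
      rwa [mul_zero] at this
    refine squeeze_zero_norm' ?_ hg
    filter_upwards [self_mem_nhdsWithin] with u hu
    exact hbound u hu
  have htendc : Tendsto F (nhdsWithin 0 (Set.Ioi 0)) (nhds (F c)) := by
    refine Tendsto.congr' ?_ tendsto_const_nhds
    filter_upwards [Ioc_mem_nhdsGT_of_mem (Set.mem_Ico.2 ⟨le_rfl, hc⟩)] with u hu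
    exact (hconst u hu.1 hu.2).symm
  have : F c = 0 := tendsto_nhds_unique htendc htend0
  rw [hF] at this
  simp only at this
  linarith [this]

end IBP


section Crossing

variable {x α zstar : ℝ}

/-- Integral of `u^(d-1) * Δ u` in terms of `K` and an explicit power integral. -/
lemma delta_int (hx0 : 0 < x) (hx1 : x < 1) (hzs : 0 < zstar)
    (hmin : ∀ y ∈ Set.Ioi (0:ℝ), Real.Gamma zstar ≤ Real.Gamma y) (hα : zstar < α)
    {bb d κ W : ℝ} (hbb : -1 < bb) (hbd : -1 < bb + d) (hκ0 : 0 < κ)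
    (hκd : 0 < d + κ) (hW : 0 < W) {c : ℝ} (hc : 0 < c) :
    IntegrableOn (fun u => u ^ (d - 1) * (Jf x α bb u / W - (u / c) ^ κ)) (Set.Ioc 0 c) ∧
    ∫ u in Set.Ioc (0:ℝ) c, u ^ (d - 1) * (Jf x α bb u / W - (u / c) ^ κ) =
      W⁻¹ * (∫ t in Set.Ioc (0:ℝ) c, t ^ (d - 1) * Jf x α bb t) -
        (c ^ κ)⁻¹ * (c ^ (d + κ) / (d + κ)) := by
  have hαpos : 0 < α := lt_trans hzs hα
  have hdκ1 : (-1:ℝ) < d + κ - 1 := by linarith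
  have hpow : IntegrableOn (fun u : ℝ => (c ^ κ)⁻¹ * u ^ (d + κ - 1)) (Set.Ioc 0 c) := by
    have h0 := intervalIntegral.intervalIntegrable_rpow' (a := 0) (b := c) hdκ1
    rw [intervalIntegrable_iff_integrableOn_Ioc_of_le hc.le] at h0
    exact h0.const_mul _
  have hK := integrableOn_K hx0 hx1 hzs hmin hα hbb hbd c
  have hcl : IntegrableOn (fun u : ℝ =>
      W⁻¹ * (u ^ (d - 1) * Jf x α bb u) - (c ^ κ)⁻¹ * u ^ (d + κ - 1)) (Set.Ioc 0 c) :=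
    (hK.const_mul W⁻¹).sub hpow
  have heq : ∀ u ∈ Set.Ioc (0:ℝ) c, u ^ (d - 1) * (Jf x α bb u / W - (u / c) ^ κ) =
      W⁻¹ * (u ^ (d - 1) * Jf x α bb u) - (c ^ κ)⁻¹ * u ^ (d + κ - 1) := by
    intro u hu
    have h1 : (u / c) ^ κ = u ^ κ / c ^ κ := Real.div_rpow hu.1.le hc.le κ
    have h2 : u ^ (d - 1) * u ^ κ = u ^ (d + κ - 1) := by
      rw [← Real.rpow_add hu.1, show d - 1 + κ = d + κ - 1 from by ring]
    rw [mul_sub, h1]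
    rw [show u ^ (d - 1) * (u ^ κ / c ^ κ) = (c ^ κ)⁻¹ * (u ^ (d - 1) * u ^ κ) from by ring, h2]
    rw [show u ^ (d - 1) * (Jf x α bb u / W) = W⁻¹ * (u ^ (d - 1) * Jf x α bb u) from by ring]
  constructor
  · exact (integrableOn_congr_fun heq measurableSet_Ioc).2 hcl
  · rw [setIntegral_congr_fun measurableSet_Ioc heq]
    rw [MeasureTheory.integral_sub (hK.const_mul W⁻¹) hpow]
    rw [MeasureTheory.integral_const_mul, MeasureTheory.integral_const_mul]
    have h3 : ∫ u in Set.Ioc (0:ℝ) c, u ^ (d + κ - 1) = c ^ (d + κ) / (d + κ) := by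
      rw [← intervalIntegral.integral_of_le hc.le, integral_rpow (Or.inl hdκ1),
        show d + κ - 1 + 1 = d + κ from by ring, Real.zero_rpow hκd.ne', sub_zero]
    rw [h3]

/-- Strict comparison: `W < P`. -/
lemma P_gt (hx0 : 0 < x) (hx1 : x < 1) (hzs : 0 < zstar)
    (hmin : ∀ y ∈ Set.Ioi (0:ℝ), Real.Gamma zstar ≤ Real.Gamma y) (hα : zstar < α)
    {bb d₂ : ℝ} (hbb : -1 < bb) (hbd : -1 < bb + d₂) (hd2 : d₂ < 0) {c : ℝ} (hc : 0 < c) :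
    Jf x α bb c < c ^ (-d₂) * Jf x α (bb + d₂) c := by
  have hαpos : 0 < α := lt_trans hzs hα
  set g : ℝ → ℝ := fun t => c ^ (-d₂) * (t ^ (bb + d₂) * hf x α t) - t ^ bb * hf x α t with hg
  have hgeq : ∀ t ∈ Set.Ioc (0:ℝ) c, g t = t ^ bb * hf x α t * ((t / c) ^ d₂ - 1) := by
    intro t ht
    have h1 : (t / c) ^ d₂ = t ^ d₂ / c ^ d₂ := Real.div_rpow ht.1.le hc.le d₂
    have h2 : c ^ (-d₂) = (c ^ d₂)⁻¹ := by
      rw [Real.rpow_neg hc.le]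
    have h3 : t ^ (bb + d₂) = t ^ bb * t ^ d₂ := Real.rpow_add ht.1 _ _
    rw [hg]
    simp only
    rw [h1, h2, h3]
    ring
  have hgnonneg : ∀ t ∈ Set.Ioc (0:ℝ) c, 0 ≤ g t := by
    intro t ht
    rw [hgeq t ht]
    have h4 : (1:ℝ) ≤ (t / c) ^ d₂ := by
      rcases lt_or_eq_of_le ht.2 with h | h
      · have htc : t / c < 1 := (div_lt_one hc).2 h
        have htc0 : 0 < t / c := div_pos ht.1 hc
        exact le_of_lt ((Real.one_lt_rpow_iff_of_pos htc0).2 (Or.inr ⟨htc, hd2⟩))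
      · rw [h, div_self hc.ne', Real.one_rpow]
    have h5 : 0 ≤ t ^ bb * hf x α t :=
      mul_nonneg (Real.rpow_nonneg ht.1.le _) (hf_pos hx0 hαpos ht.1.le).le
    nlinarith
  have hgpos : ∀ t ∈ Set.Ioo (0:ℝ) c, 0 < g t := by
    intro t ht
    rw [hgeq t (Set.Ioo_subset_Ioc_self ht)]
    have htc : t / c < 1 := (div_lt_one hc).2 ht.2
    have htc0 : 0 < t / c := div_pos ht.1 hc
    have h4 : (1:ℝ) < (t / c) ^ d₂ :=
      (Real.one_lt_rpow_iff_of_pos htc0).2 (Or.inr ⟨htc, hd2⟩)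
    have h5 : 0 < t ^ bb * hf x α t :=
      mul_pos (Real.rpow_pos_of_pos ht.1 _) (hf_pos hx0 hαpos ht.1.le)
    nlinarith
  have hgint : IntegrableOn g (Set.Ioc 0 c) :=
    ((integrableOn_Ioc_f hx0 hx1 hzs hmin hα hbd c).const_mul _).sub
      (integrableOn_Ioc_f hx0 hx1 hzs hmin hα hbb c)
  have hpos : 0 < ∫ t in Set.Ioc (0:ℝ) c, g t := by
    rw [setIntegral_pos_iff_support_of_nonneg_ae ?_ hgint]
    · refine lt_of_lt_of_le (b := volume (Set.Ioo (0:ℝ) c)) ((Measure.measure_Ioo_pos _).mpr hc)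
        (measure_mono ?_)
      intro t ht
      exact ⟨ne_of_gt (hgpos t ht), Set.Ioo_subset_Ioc_self ht⟩
    · refine (ae_restrict_iff' measurableSet_Ioc).2 (ae_of_all _ ?_)
      exact hgnonneg
  have hsub : ∫ t in Set.Ioc (0:ℝ) c, g t =
      c ^ (-d₂) * Jf x α (bb + d₂) c - Jf x α bb c := by
    rw [hg]
    rw [MeasureTheory.integral_sub
      ((integrableOn_Ioc_f hx0 hx1 hzs hmin hα hbd c).const_mul _)
      (integrableOn_Ioc_f hx0 hx1 hzs hmin hα hbb c)]
    rw [MeasureTheory.integral_const_mul]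
    rfl
  rw [hsub] at hpos
  linarith

/-- No-dip property of `Ψ`. -/
lemma no_dip (hx0 : 0 < x) (hx1 : x < 1) (hzs : 0 < zstar)
    (hmin : ∀ y ∈ Set.Ioi (0:ℝ), Real.Gamma zstar ≤ Real.Gamma y) (hα : zstar < α)
    {bb : ℝ} (hbb : -1 < bb) {c κ : ℝ} (hc : 0 < c)
    {u₁ u₂ : ℝ} (h1 : u₁ ∈ Set.Ioc (0:ℝ) c) (h2 : u₂ ∈ Set.Ioc (0:ℝ) c) (h12 : u₁ ≤ u₂)
    (hΨ : Real.log (Jf x α bb c) - κ * Real.log c ≤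
      Real.log (Jf x α bb u₁) - κ * Real.log u₁) :
    Real.log (Jf x α bb c) - κ * Real.log c ≤
      Real.log (Jf x α bb u₂) - κ * Real.log u₂ := by
  have hαpos : 0 < α := lt_trans hzs hα
  set f : ℝ → ℝ := fun u => Real.log (Jf x α bb u) - κ * Real.log u with hfdef
  set f' : ℝ → ℝ := fun u => u ^ bb * hf x α u / Jf x α bb u - κ * u⁻¹ with hf'def
  have hder : ∀ u : ℝ, 0 < u → HasDerivAt f (f' u) u := by
    intro u hu
    have hJ := hasDerivAt_Jf hx0 hx1 hzs hmin hα hbb hu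
    have hJpos := Jf_pos hx0 hx1 hzs hmin hα hbb hu
    exact (hJ.log hJpos.ne').sub ((Real.hasDerivAt_log hu.ne').const_mul κ)
  by_contra hcon
  push_neg at hcon
  -- hcon : f u₂ < f c
  have hu₁0 : 0 < u₁ := h1.1
  have h12' : u₁ < u₂ := by
    rcases lt_or_eq_of_le h12 with h | h
    · exact h
    · rw [h] at hΨ; exact absurd hΨ (not_le.2 hcon)
  have hu₂c : u₂ < c := by
    rcases lt_or_eq_of_le h2.2 with h | h
    · exact h
    · rw [h] at hcon; exact absurd hcon (lt_irrefl _)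
  have hcont1 : ContinuousOn f (Set.Icc u₁ u₂) := fun u hu =>
    ((hder u (lt_of_lt_of_le hu₁0 hu.1)).continuousAt).continuousWithinAt
  have hcont2 : ContinuousOn f (Set.Icc u₂ c) := fun u hu =>
    ((hder u (lt_of_lt_of_le (lt_trans hu₁0 h12') hu.1)).continuousAt).continuousWithinAt
  obtain ⟨ξ₁, hξ₁mem, hξ₁⟩ := exists_hasDerivAt_eq_slope f f' h12' hcont1
    (fun u hu => hder u (lt_trans hu₁0 hu.1))
  obtain ⟨ξ₂, hξ₂mem, hξ₂⟩ := exists_hasDerivAt_eq_slope f f' hu₂c hcont2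
    (fun u hu => hder u (lt_trans (lt_trans hu₁0 h12') hu.1))
  have hξ₁pos : 0 < ξ₁ := lt_trans hu₁0 hξ₁mem.1
  have hξ₂pos : 0 < ξ₂ := lt_trans (lt_trans hu₁0 h12') hξ₂mem.1
  have hξ₁₂ : ξ₁ ≤ ξ₂ := le_of_lt (lt_trans hξ₁mem.2 hξ₂mem.1)
  have hJξ₁ : 0 < Jf x α bb ξ₁ := Jf_pos hx0 hx1 hzs hmin hα hbb hξ₁pos
  have hJξ₂ : 0 < Jf x α bb ξ₂ := Jf_pos hx0 hx1 hzs hmin hα hbb hξ₂pos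
  have hsl₁ : f' ξ₁ < 0 := by
    rw [hξ₁]
    apply div_neg_of_neg_of_pos
    · have := hΨ; have := hcon; simp only [hfdef] at *; linarith
    · linarith
  have hsl₂ : 0 < f' ξ₂ := by
    rw [hξ₂]
    apply div_pos
    · simp only [hfdef] at *; linarith
    · linarith
  have hA : ξ₁ ^ (bb + 1) * hf x α ξ₁ < κ * Jf x α bb ξ₁ := by
    have hq : ξ₁ ^ bb * hf x α ξ₁ / Jf x α bb ξ₁ < κ / ξ₁ := by
      have he : κ * ξ₁⁻¹ = κ / ξ₁ := by rw [div_eq_mul_inv]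
      simp only [hf'def] at hsl₁
      linarith
    rw [div_lt_div_iff₀ hJξ₁ hξ₁pos] at hq
    calc ξ₁ ^ (bb + 1) * hf x α ξ₁ = ξ₁ ^ bb * hf x α ξ₁ * ξ₁ := by
          rw [Real.rpow_add_one hξ₁pos.ne']; ring
      _ < κ * Jf x α bb ξ₁ := hq
  have hB : κ * Jf x α bb ξ₂ < ξ₂ ^ (bb + 1) * hf x α ξ₂ := by
    have hq : κ / ξ₂ < ξ₂ ^ bb * hf x α ξ₂ / Jf x α bb ξ₂ := by
      have he : κ * ξ₂⁻¹ = κ / ξ₂ := by rw [div_eq_mul_inv]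
      simp only [hf'def] at hsl₂
      linarith
    rw [div_lt_div_iff₀ hξ₂pos hJξ₂] at hq
    calc κ * Jf x α bb ξ₂ < ξ₂ ^ bb * hf x α ξ₂ * ξ₂ := hq
      _ = ξ₂ ^ (bb + 1) * hf x α ξ₂ := by rw [Real.rpow_add_one hξ₂pos.ne']; ring
  have hanti := Hratio_antitone hx0 hx1 hzs hmin hα hbb hξ₁pos hξ₁₂
  nlinarith [mul_lt_mul_of_pos_right hA hJξ₂, mul_lt_mul_of_pos_right hB hJξ₁]

end Crossing


section KeyLemma

variable {x α zstar : ℝ}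

/-- The key pointwise inequality. -/
lemma key (hx0 : 0 < x) (hx1 : x < 1) (hzs : 0 < zstar)
    (hmin : ∀ y ∈ Set.Ioi (0:ℝ), Real.Gamma zstar ≤ Real.Gamma y) (hα : zstar < α)
    {β₁ β₂ l c : ℝ} (hb2 : -1 < β₂) (hb21 : β₂ < β₁) (hl0 : 0 < l) (hl1 : l < 1)
    (hc : 0 < c) :
    c ^ (l * β₁ + (1 - l) * β₂) * hf x α c / Jf x α (l * β₁ + (1 - l) * β₂) c ≤
      l * (c ^ β₁ * hf x α c / Jf x α β₁ c) +
        (1 - l) * (c ^ β₂ * hf x α c / Jf x α β₂ c) := by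
  have hαpos : 0 < α := lt_trans hzs hα
  set bb : ℝ := l * β₁ + (1 - l) * β₂ with hbbdef
  set d₁ : ℝ := (1 - l) * (β₁ - β₂) with hd₁def
  set d₂ : ℝ := -(l * (β₁ - β₂)) with hd₂def
  have hb1 : -1 < β₁ := lt_trans hb2 hb21
  have hbb : -1 < bb := by rw [hbbdef]; nlinarith
  have hd₁0 : 0 < d₁ := by rw [hd₁def]; nlinarith
  have hd₂0 : d₂ < 0 := by rw [hd₂def]; nlinarith
  have hbd₁ : bb + d₁ = β₁ := by rw [hbbdef, hd₁def]; ring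
  have hbd₂ : bb + d₂ = β₂ := by rw [hbbdef, hd₂def]; ring
  have hld : l * d₁ + (1 - l) * d₂ = 0 := by rw [hd₁def, hd₂def]; ring
  have hbd₁' : -1 < bb + d₁ := by rw [hbd₁]; exact hb1
  have hbd₂' : -1 < bb + d₂ := by rw [hbd₂]; exact hb2
  have hJ1 : 0 < Jf x α β₁ c := Jf_pos hx0 hx1 hzs hmin hα hb1 hc
  have hJ2 : 0 < Jf x α β₂ c := Jf_pos hx0 hx1 hzs hmin hα hb2 hc
  have hW : 0 < Jf x α bb c := Jf_pos hx0 hx1 hzs hmin hα hbb hc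
  set W : ℝ := Jf x α bb c with hWdef
  set P : ℝ := c ^ (-d₂) * Jf x α β₂ c with hPdef
  have hP0 : 0 < P := mul_pos (Real.rpow_pos_of_pos hc _) hJ2
  have hWP : W < P := by
    have h := P_gt hx0 hx1 hzs hmin hα hbb hbd₂' hd₂0 hc
    rw [hbd₂] at h
    exact h
  have hWPne : W - P ≠ 0 := by linarith
  obtain ⟨κ, hκdef⟩ : ∃ k : ℝ, k = d₂ * P / (W - P) := ⟨_, rfl⟩
  have hκ0 : 0 < κ := by
    rw [hκdef]
    apply div_pos_iff.2
    exact Or.inr ⟨mul_neg_of_neg_of_pos hd₂0 hP0, by linarith⟩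
  have hκP : (d₂ + κ) * P = κ * W := by
    rw [hκdef]
    field_simp
    ring
  have hκd₂ : 0 < d₂ + κ := by
    by_contra hcon
    push_neg at hcon
    have h1 : (d₂ + κ) * P ≤ 0 := mul_nonpos_iff.2 (Or.inr ⟨hcon, hP0.le⟩)
    rw [hκP] at h1
    nlinarith [mul_pos hκ0 hW]
  have hκd₁ : 0 < d₁ + κ := by linarith
  -- IBP identities
  have hI1 : Jf x α β₁ c = c ^ d₁ * W -
      d₁ * ∫ t in Set.Ioc (0:ℝ) c, t ^ (d₁ - 1) * Jf x α bb t := by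
    have h := ibp hx0 hx1 hzs hmin hα hbb hbd₁' hc
    rw [hbd₁] at h
    exact h
  have hI2 : Jf x α β₂ c = c ^ d₂ * W -
      d₂ * ∫ t in Set.Ioc (0:ℝ) c, t ^ (d₂ - 1) * Jf x α bb t := by
    have h := ibp hx0 hx1 hzs hmin hα hbb hbd₂' hc
    rw [hbd₂] at h
    exact h
  have hJ2P : c ^ d₂ * P = Jf x α β₂ c := by
    rw [hPdef, ← mul_assoc, ← Real.rpow_add hc,
      show d₂ + -d₂ = 0 from by ring, Real.rpow_zero, one_mul]
  -- delta integrals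
  obtain ⟨hint₁, hval₁⟩ := delta_int (d := d₁) (κ := κ) (W := W)
    hx0 hx1 hzs hmin hα hbb hbd₁' hκ0 (by linarith) hW hc
  obtain ⟨hint₂, hval₂⟩ := delta_int (d := d₂) (κ := κ) (W := W)
    hx0 hx1 hzs hmin hα hbb hbd₂' hκ0 (by linarith) hW hc
  have hcκ : (0:ℝ) < c ^ κ := Real.rpow_pos_of_pos hc κ
  -- the matched integral vanishes
  have hd₂K₂ : d₂ * ∫ t in Set.Ioc (0:ℝ) c, t ^ (d₂ - 1) * Jf x α bb t =
      c ^ d₂ * W - c ^ d₂ * P := by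
    have h2 := hJ2P
    linarith [hI2]
  have hgoal' : d₂ * ((∫ t in Set.Ioc (0:ℝ) c, t ^ (d₂ - 1) * Jf x α bb t) * (d₂ + κ)) =
      d₂ * (c ^ d₂ * W) := by
    linear_combination (d₂ + κ) * hd₂K₂ - c ^ d₂ * hκP
  have hK₂eq : (∫ t in Set.Ioc (0:ℝ) c, t ^ (d₂ - 1) * Jf x α bb t) * (d₂ + κ) =
      c ^ d₂ * W := mul_left_cancel₀ (ne_of_lt hd₂0) hgoal'
  have hM₂int : ∫ u in Set.Ioc (0:ℝ) c,
      u ^ (d₂ - 1) * (Jf x α bb u / W - (u / c) ^ κ) = 0 := by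
    rw [hval₂, Real.rpow_add hc d₂ κ, sub_eq_zero,
      show (c ^ κ)⁻¹ * (c ^ d₂ * c ^ κ / (d₂ + κ)) = c ^ d₂ / (d₂ + κ) from by
        rw [mul_comm (c ^ d₂) (c ^ κ), mul_div_assoc, ← mul_assoc,
          inv_mul_cancel₀ hcκ.ne', one_mul],
      inv_mul_eq_div, div_eq_div_iff hW.ne' hκd₂.ne']
    linear_combination hK₂eq
  -- crossing point
  have hiff : ∀ u ∈ Set.Ioc (0:ℝ) c,
      (0 ≤ Jf x α bb u / W - (u / c) ^ κ ↔
        Real.log W - κ * Real.log c ≤ Real.log (Jf x α bb u) - κ * Real.log u) := by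
    intro u hu
    have hJu : 0 < Jf x α bb u := Jf_pos hx0 hx1 hzs hmin hα hbb hu.1
    have huc : 0 < u / c := div_pos hu.1 hc
    have hpow : 0 < (u / c) ^ κ := Real.rpow_pos_of_pos huc κ
    have hdiv : 0 < Jf x α bb u / W := div_pos hJu hW
    constructor
    · intro h
      have h2 : (u / c) ^ κ ≤ Jf x α bb u / W := by linarith
      have h3 := Real.log_le_log hpow h2
      rw [Real.log_rpow huc, Real.log_div hu.1.ne' hc.ne', Real.log_div hJu.ne' hW.ne',
        mul_sub] at h3
      linarith
    · intro h
      have h3 : Real.log ((u / c) ^ κ) ≤ Real.log (Jf x α bb u / W) := by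
        rw [Real.log_rpow huc, Real.log_div hu.1.ne' hc.ne', Real.log_div hJu.ne' hW.ne',
          mul_sub]
        linarith
      have h4 := (Real.log_le_log_iff hpow hdiv).1 h3
      linarith
  have hΔc : (0:ℝ) ≤ Jf x α bb c / W - (c / c) ^ κ := by
    rw [← hWdef, div_self hW.ne', div_self hc.ne', Real.one_rpow]
    linarith
  set T : Set ℝ := {u | u ∈ Set.Ioc (0:ℝ) c ∧ 0 ≤ Jf x α bb u / W - (u / c) ^ κ} with hTdef
  have hcT : c ∈ T := ⟨Set.right_mem_Ioc.2 hc, hΔc⟩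
  have hTbdd : BddBelow T := ⟨0, fun u hu => hu.1.1.le⟩
  set t₀ : ℝ := sInf T with ht₀def
  have ht₀c : t₀ ≤ c := csInf_le hTbdd hcT
  have ht₀0 : 0 ≤ t₀ := le_csInf ⟨c, hcT⟩ fun u hu => hu.1.1.le
  have hneg : ∀ u ∈ Set.Ioc (0:ℝ) c, u < t₀ → Jf x α bb u / W - (u / c) ^ κ ≤ 0 := by
    intro u hu hut
    by_contra hcon
    push_neg at hcon
    have hmem : u ∈ T := ⟨hu, hcon.le⟩
    have := csInf_le hTbdd hmem
    rw [← ht₀def] at this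
    linarith
  have hposs : ∀ u ∈ Set.Ioc (0:ℝ) c, t₀ < u → 0 ≤ Jf x α bb u / W - (u / c) ^ κ := by
    intro u hu htu
    have hlt : sInf T < u := by rw [← ht₀def]; exact htu
    obtain ⟨u', hu'T, hu'lt⟩ := exists_lt_of_csInf_lt ⟨c, hcT⟩ hlt
    have hΨu' := (hiff u' hu'T.1).1 hu'T.2
    have hΨu := no_dip hx0 hx1 hzs hmin hα hbb hc hu'T.1 hu hu'lt.le hΨu'
    exact (hiff u hu).2 hΨu
  -- integral inequality
  have hae : ∀ᵐ u : ℝ, u ∉ ({t₀} : Set ℝ) :=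
    MeasureTheory.measure_eq_zero_iff_ae_notMem.1 (by exact volume_singleton)
  have hptwise : 0 ≤ ∫ u in Set.Ioc (0:ℝ) c,
      (u ^ (d₁ - d₂) - t₀ ^ (d₁ - d₂)) *
        (u ^ (d₂ - 1) * (Jf x α bb u / W - (u / c) ^ κ)) := by
    refine MeasureTheory.integral_nonneg_of_ae ?_
    refine (ae_restrict_iff' measurableSet_Ioc).2 ?_
    filter_upwards [hae] with u hne hu
    rw [Set.mem_singleton_iff] at hne
    rcases lt_or_gt_of_ne hne with hlt | hgt
    · have h1 : Jf x α bb u / W - (u / c) ^ κ ≤ 0 := hneg u hu hlt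
      have h2 : u ^ (d₁ - d₂) ≤ t₀ ^ (d₁ - d₂) :=
        Real.rpow_le_rpow hu.1.le hlt.le (by linarith)
      have h3 : (0:ℝ) ≤ u ^ (d₂ - 1) := Real.rpow_nonneg hu.1.le _
      have h4 : u ^ (d₂ - 1) * (Jf x α bb u / W - (u / c) ^ κ) ≤ 0 :=
        mul_nonpos_iff.2 (Or.inl ⟨h3, h1⟩)
      exact mul_nonneg_iff.2 (Or.inr ⟨by linarith, h4⟩)
    · have h1 : 0 ≤ Jf x α bb u / W - (u / c) ^ κ := hposs u hu hgt
      have h2 : t₀ ^ (d₁ - d₂) ≤ u ^ (d₁ - d₂) :=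
        Real.rpow_le_rpow ht₀0 hgt.le (by linarith)
      exact mul_nonneg (by linarith)
        (mul_nonneg (Real.rpow_nonneg hu.1.le _) h1)
  have hsplit : ∫ u in Set.Ioc (0:ℝ) c,
      (u ^ (d₁ - d₂) - t₀ ^ (d₁ - d₂)) *
        (u ^ (d₂ - 1) * (Jf x α bb u / W - (u / c) ^ κ)) =
      (∫ u in Set.Ioc (0:ℝ) c, u ^ (d₁ - 1) * (Jf x α bb u / W - (u / c) ^ κ)) -
        t₀ ^ (d₁ - d₂) *
          ∫ u in Set.Ioc (0:ℝ) c, u ^ (d₂ - 1) * (Jf x α bb u / W - (u / c) ^ κ) := by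
    have heq : ∀ u ∈ Set.Ioc (0:ℝ) c,
        (u ^ (d₁ - d₂) - t₀ ^ (d₁ - d₂)) *
          (u ^ (d₂ - 1) * (Jf x α bb u / W - (u / c) ^ κ)) =
        u ^ (d₁ - 1) * (Jf x α bb u / W - (u / c) ^ κ) -
          t₀ ^ (d₁ - d₂) * (u ^ (d₂ - 1) * (Jf x α bb u / W - (u / c) ^ κ)) := by
      intro u hu
      have h2 : u ^ (d₁ - d₂) * u ^ (d₂ - 1) = u ^ (d₁ - 1) := by
        rw [← Real.rpow_add hu.1, show d₁ - d₂ + (d₂ - 1) = d₁ - 1 from by ring]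
      calc (u ^ (d₁ - d₂) - t₀ ^ (d₁ - d₂)) *
            (u ^ (d₂ - 1) * (Jf x α bb u / W - (u / c) ^ κ))
          = u ^ (d₁ - d₂) * u ^ (d₂ - 1) * (Jf x α bb u / W - (u / c) ^ κ) -
            t₀ ^ (d₁ - d₂) * (u ^ (d₂ - 1) * (Jf x α bb u / W - (u / c) ^ κ)) := by ring
        _ = u ^ (d₁ - 1) * (Jf x α bb u / W - (u / c) ^ κ) -
            t₀ ^ (d₁ - d₂) * (u ^ (d₂ - 1) * (Jf x α bb u / W - (u / c) ^ κ)) := by rw [h2]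
    rw [setIntegral_congr_fun measurableSet_Ioc heq]
    rw [MeasureTheory.integral_sub hint₁ (hint₂.const_mul _)]
    rw [MeasureTheory.integral_const_mul]
  have hM₁ : 0 ≤ ∫ u in Set.Ioc (0:ℝ) c,
      u ^ (d₁ - 1) * (Jf x α bb u / W - (u / c) ^ κ) := by
    rw [hsplit, hM₂int, mul_zero, sub_zero] at hptwise
    exact hptwise
  -- bound on J₁
  have hc₁ : (c ^ κ)⁻¹ * (c ^ (d₁ + κ) / (d₁ + κ)) = c ^ d₁ / (d₁ + κ) := by
    rw [Real.rpow_add hc, mul_comm (c ^ d₁) (c ^ κ), mul_div_assoc, ← mul_assoc,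
      inv_mul_cancel₀ hcκ.ne', one_mul]
  have hK₁ge : W * (c ^ d₁ / (d₁ + κ)) ≤
      ∫ t in Set.Ioc (0:ℝ) c, t ^ (d₁ - 1) * Jf x α bb t := by
    rw [hval₁, hc₁] at hM₁
    have h6 : c ^ d₁ / (d₁ + κ) ≤
        W⁻¹ * ∫ t in Set.Ioc (0:ℝ) c, t ^ (d₁ - 1) * Jf x α bb t := by linarith
    have h7 := mul_le_mul_of_nonneg_left h6 hW.le
    rwa [← mul_assoc, mul_inv_cancel₀ hW.ne', one_mul] at h7
  have hJ₁le : Jf x α β₁ c ≤ c ^ d₁ * W * κ / (d₁ + κ) := by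
    rw [hI1]
    have h6 : d₁ * (W * (c ^ d₁ / (d₁ + κ))) ≤
        d₁ * ∫ t in Set.Ioc (0:ℝ) c, t ^ (d₁ - 1) * Jf x α bb t :=
      mul_le_mul_of_nonneg_left hK₁ge hd₁0.le
    have h7 : c ^ d₁ * W - d₁ * (W * (c ^ d₁ / (d₁ + κ))) = c ^ d₁ * W * κ / (d₁ + κ) := by
      field_simp
      ring
    linarith
  -- final assembly
  have hA0 : 0 < c ^ bb * hf x α c :=
    mul_pos (Real.rpow_pos_of_pos hc bb) (hf_pos hx0 hαpos hc.le)
  have hWκ : 0 < W * κ := mul_pos hW hκ0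
  have hcb1 : c ^ β₁ = c ^ bb * c ^ d₁ := by rw [← hbd₁, Real.rpow_add hc]
  have hcb2 : c ^ β₂ = c ^ bb * c ^ d₂ := by rw [← hbd₂, Real.rpow_add hc]
  have ht1 : c ^ bb * hf x α c * (d₁ + κ) / (W * κ) ≤ c ^ β₁ * hf x α c / Jf x α β₁ c := by
    rw [div_le_div_iff₀ hWκ hJ1]
    have h8 : c ^ bb * hf x α c * (d₁ + κ) * Jf x α β₁ c ≤
        c ^ bb * hf x α c * (d₁ + κ) * (c ^ d₁ * W * κ / (d₁ + κ)) :=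
      mul_le_mul_of_nonneg_left hJ₁le (mul_nonneg hA0.le (by linarith))
    have h9 : c ^ bb * hf x α c * (d₁ + κ) * (c ^ d₁ * W * κ / (d₁ + κ)) =
        c ^ β₁ * hf x α c * (W * κ) := by
      rw [hcb1, mul_div_assoc]
      rw [show c ^ bb * hf x α c * (d₁ + κ) * (c ^ d₁ * W * (κ / (d₁ + κ))) =
        (d₁ + κ) * (κ / (d₁ + κ)) * (c ^ bb * hf x α c * (c ^ d₁ * W)) from by ring]
      rw [mul_div_assoc' (d₁ + κ) κ (d₁ + κ), mul_comm (d₁ + κ) κ,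
        mul_div_assoc κ (d₁ + κ) (d₁ + κ), div_self hκd₁.ne', mul_one]
      ring
    linarith
  have ht2 : c ^ β₂ * hf x α c / Jf x α β₂ c =
      c ^ bb * hf x α c * (d₂ + κ) / (W * κ) := by
    rw [div_eq_div_iff hJ2.ne' hWκ.ne', ← hJ2P, hcb2]
    linear_combination (-(c ^ bb * c ^ d₂ * hf x α c)) * hκP
  have hsum : l * (c ^ bb * hf x α c * (d₁ + κ) / (W * κ)) +
      (1 - l) * (c ^ bb * hf x α c * (d₂ + κ) / (W * κ)) = c ^ bb * hf x α c / W := by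
    rw [show l * (c ^ bb * hf x α c * (d₁ + κ) / (W * κ)) +
        (1 - l) * (c ^ bb * hf x α c * (d₂ + κ) / (W * κ)) =
        (l * (c ^ bb * hf x α c * (d₁ + κ)) + (1 - l) * (c ^ bb * hf x α c * (d₂ + κ))) /
          (W * κ) from by ring]
    rw [show l * (c ^ bb * hf x α c * (d₁ + κ)) + (1 - l) * (c ^ bb * hf x α c * (d₂ + κ)) =
      κ * (c ^ bb * hf x α c) from by linear_combination (c ^ bb * hf x α c) * hld]
    rw [mul_comm W κ, mul_div_mul_left _ _ hκ0.ne']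
  calc c ^ bb * hf x α c / W
      = l * (c ^ bb * hf x α c * (d₁ + κ) / (W * κ)) +
        (1 - l) * (c ^ bb * hf x α c * (d₂ + κ) / (W * κ)) := hsum.symm
    _ ≤ l * (c ^ β₁ * hf x α c / Jf x α β₁ c) +
        (1 - l) * (c ^ β₂ * hf x α c / Jf x α β₂ c) := by
        refine add_le_add (mul_le_mul_of_nonneg_left ht1 hl0.le) (le_of_eq ?_)
        rw [ht2]

end KeyLemma


section Main

variable {x α zstar : ℝ}

lemma Jf_tendsto (hx0 : 0 < x) (hx1 : x < 1) (hzs : 0 < zstar)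
    (hmin : ∀ y ∈ Set.Ioi (0:ℝ), Real.Gamma zstar ≤ Real.Gamma y) (hα : zstar < α)
    {γ : ℝ} (hγ : -1 < γ) :
    Tendsto (fun c => Jf x α γ c) atTop (nhds (Jinf x α γ)) := by
  have h := MeasureTheory.intervalIntegral_tendsto_integral_Ioi 0
    (integrableOn_Ioi_f hx0 hx1 hzs hmin hα hγ) tendsto_id
  refine h.congr' ?_
  filter_upwards [eventually_ge_atTop (0:ℝ)] with c hc
  exact intervalIntegral.integral_of_le hc

lemma main_ineq (hx0 : 0 < x) (hx1 : x < 1) (hzs : 0 < zstar)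
    (hmin : ∀ y ∈ Set.Ioi (0:ℝ), Real.Gamma zstar ≤ Real.Gamma y) (hα : zstar < α)
    {s β₁ β₂ l : ℝ} (hs : 0 < s) (hb2 : -1 < β₂) (hb21 : β₂ < β₁)
    (hl0 : 0 < l) (hl1 : l < 1) :
    (Jf x α β₁ s / Jinf x α β₁) ^ l * (Jf x α β₂ s / Jinf x α β₂) ^ (1 - l) ≤
      Jf x α (l * β₁ + (1 - l) * β₂) s / Jinf x α (l * β₁ + (1 - l) * β₂) := by
  have hαpos : 0 < α := lt_trans hzs hα
  have hb1 : -1 < β₁ := lt_trans hb2 hb21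
  obtain ⟨bb, hbbeq⟩ : ∃ b : ℝ, b = l * β₁ + (1 - l) * β₂ := ⟨_, rfl⟩
  have hbb : -1 < bb := by rw [hbbeq]; nlinarith
  rw [← hbbeq]
  set Φ : ℝ → ℝ := fun c => l * Real.log (Jf x α β₁ c) +
    (1 - l) * Real.log (Jf x α β₂ c) - Real.log (Jf x α bb c) with hΦdef
  have hΦd : ∀ c : ℝ, 0 < c → HasDerivAt Φ
      (l * (c ^ β₁ * hf x α c / Jf x α β₁ c) +
        (1 - l) * (c ^ β₂ * hf x α c / Jf x α β₂ c) -
          c ^ bb * hf x α c / Jf x α bb c) c := by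
    intro c hc
    have h1 := (hasDerivAt_Jf hx0 hx1 hzs hmin hα hb1 hc).log
      (Jf_pos hx0 hx1 hzs hmin hα hb1 hc).ne'
    have h2 := (hasDerivAt_Jf hx0 hx1 hzs hmin hα hb2 hc).log
      (Jf_pos hx0 hx1 hzs hmin hα hb2 hc).ne'
    have h3 := (hasDerivAt_Jf hx0 hx1 hzs hmin hα hbb hc).log
      (Jf_pos hx0 hx1 hzs hmin hα hbb hc).ne'
    exact ((h1.const_mul l).add (h2.const_mul (1 - l))).sub h3
  have hΦmono : MonotoneOn Φ (Set.Ici s) := by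
    refine monotoneOn_of_deriv_nonneg (convex_Ici s) ?_ ?_ ?_
    · intro c hc
      exact ((hΦd c (lt_of_lt_of_le hs hc)).continuousAt).continuousWithinAt
    · rw [interior_Ici]
      intro c hc
      exact ((hΦd c (lt_trans hs hc)).differentiableAt).differentiableWithinAt
    · rw [interior_Ici]
      intro c hc
      have hc0 : 0 < c := lt_trans hs hc
      rw [(hΦd c hc0).deriv]
      have hkey := key hx0 hx1 hzs hmin hα hb2 hb21 hl0 hl1 hc0
      rw [← hbbeq] at hkey
      linarith
  have hΦtend : Tendsto Φ atTop (nhds (l * Real.log (Jinf x α β₁) +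
      (1 - l) * Real.log (Jinf x α β₂) - Real.log (Jinf x α bb))) := by
    have h1 := (Jf_tendsto hx0 hx1 hzs hmin hα hb1).log
      (Jinf_pos hx0 hx1 hzs hmin hα hb1).ne'
    have h2 := (Jf_tendsto hx0 hx1 hzs hmin hα hb2).log
      (Jinf_pos hx0 hx1 hzs hmin hα hb2).ne'
    have h3 := (Jf_tendsto hx0 hx1 hzs hmin hα hbb).log
      (Jinf_pos hx0 hx1 hzs hmin hα hbb).ne'
    exact ((h1.const_mul l).add (h2.const_mul (1 - l))).sub h3
  have hmono_ev : ∀ᶠ c in atTop, Φ s ≤ Φ c := by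
    filter_upwards [eventually_ge_atTop s] with c hc
    exact hΦmono Set.self_mem_Ici (Set.mem_Ici.2 hc) hc
  have hΦs : Φ s ≤ l * Real.log (Jinf x α β₁) + (1 - l) * Real.log (Jinf x α β₂) -
      Real.log (Jinf x α bb) := ge_of_tendsto hΦtend hmono_ev
  have hΦs' : l * Real.log (Jf x α β₁ s) + (1 - l) * Real.log (Jf x α β₂ s) -
      Real.log (Jf x α bb s) ≤ l * Real.log (Jinf x α β₁) +
      (1 - l) * Real.log (Jinf x α β₂) - Real.log (Jinf x α bb) := by
    rw [hΦdef] at hΦs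
    simpa using hΦs
  -- convert to the ratio inequality
  have hJ1s : 0 < Jf x α β₁ s := Jf_pos hx0 hx1 hzs hmin hα hb1 hs
  have hJ2s : 0 < Jf x α β₂ s := Jf_pos hx0 hx1 hzs hmin hα hb2 hs
  have hJbs : 0 < Jf x α bb s := Jf_pos hx0 hx1 hzs hmin hα hbb hs
  have hI1 : 0 < Jinf x α β₁ := Jinf_pos hx0 hx1 hzs hmin hα hb1
  have hI2 : 0 < Jinf x α β₂ := Jinf_pos hx0 hx1 hzs hmin hα hb2
  have hIb : 0 < Jinf x α bb := Jinf_pos hx0 hx1 hzs hmin hα hbb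
  have hR1 : 0 < Jf x α β₁ s / Jinf x α β₁ := div_pos hJ1s hI1
  have hR2 : 0 < Jf x α β₂ s / Jinf x α β₂ := div_pos hJ2s hI2
  have hR3 : 0 < Jf x α bb s / Jinf x α bb := div_pos hJbs hIb
  have hlhs : (Jf x α β₁ s / Jinf x α β₁) ^ l * (Jf x α β₂ s / Jinf x α β₂) ^ (1 - l) =
      Real.exp (Real.log (Jf x α β₁ s / Jinf x α β₁) * l +
        Real.log (Jf x α β₂ s / Jinf x α β₂) * (1 - l)) := by
    rw [Real.exp_add, Real.rpow_def_of_pos hR1, Real.rpow_def_of_pos hR2]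
  rw [hlhs, ← Real.exp_log hR3]
  apply Real.exp_le_exp.2
  rw [Real.log_div hJ1s.ne' hI1.ne', Real.log_div hJ2s.ne' hI2.ne',
    Real.log_div hJbs.ne' hIb.ne']
  nlinarith [hΦs']

end Main



section Link

variable {x α zstar : ℝ}

lemma GStar_eq (hx0 : 0 < x) (hx1 : x < 1) (hzs : 0 < zstar)
    (hmin : ∀ y ∈ Set.Ioi (0:ℝ), Real.Gamma zstar ≤ Real.Gamma y) (hα : zstar < α)
    {γ : ℝ} (hγ : -1 < γ) (s : ℝ) :
    volterraGStar γ x α s = Jf x α γ s / Jinf x α γ := by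
  have hΓ : 0 < Real.Gamma (γ + 1) := Real.Gamma_pos_of_pos (by linarith)
  have hIγ : 0 < Jinf x α γ := Jinf_pos hx0 hx1 hzs hmin hα hγ
  have hptw : ∀ t : ℝ, x ^ (t + α) * t ^ γ / (Real.Gamma (t + α + 1) * Real.Gamma (γ + 1)) =
      t ^ γ * hf x α t / Real.Gamma (γ + 1) := by
    intro t
    simp only [hf]
    ring
  have h1 : volterraMuIncStar x γ α s = Jf x α γ s / Real.Gamma (γ + 1) := by
    unfold volterraMuIncStar Jf
    rw [show (fun t => x ^ (t + α) * t ^ γ /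
        (Real.Gamma (t + α + 1) * Real.Gamma (γ + 1))) =
        fun t => t ^ γ * hf x α t / Real.Gamma (γ + 1) from funext hptw]
    exact MeasureTheory.integral_div _ _
  have h2 : volterraMu x γ α = Jinf x α γ / Real.Gamma (γ + 1) := by
    unfold volterraMu Jinf
    rw [show (fun t => x ^ (t + α) * t ^ γ /
        (Real.Gamma (t + α + 1) * Real.Gamma (γ + 1))) =
        fun t => t ^ γ * hf x α t / Real.Gamma (γ + 1) from funext hptw]
    exact MeasureTheory.integral_div _ _
  unfold volterraGStar
  rw [h1, h2, div_div_div_comm, div_self hΓ.ne', div_one]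

end Link

end VolterraProof

/-- For `0 < x < 1`, `s > 0` and `α > z*` (`z*` the abscissa of the minimum of the
gamma function on `(0, ∞)`), the function `β ↦ G*_β(x, α, s)` is log-concave on
`(-1, ∞)`. -/
theorem volterraGStar_logConcave_in_beta (x α s zstar : ℝ)
    (hx0 : 0 < x) (hx1 : x < 1) (hs : 0 < s)
    (hzstar : zstar ∈ Set.Ioi (0 : ℝ))
    (hmin : ∀ y ∈ Set.Ioi (0 : ℝ), Real.Gamma zstar ≤ Real.Gamma y)
    (hα : zstar < α) :
    ∀ β₁ β₂ : ℝ, -1 < β₁ → -1 < β₂ → ∀ l : ℝ, l ∈ Set.Icc (0 : ℝ) 1 →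
      volterraGStar β₁ x α s ^ l * volterraGStar β₂ x α s ^ (1 - l) ≤
        volterraGStar (l * β₁ + (1 - l) * β₂) x α s := by
  intro β₁ β₂ hb1 hb2 l hl
  obtain ⟨hl0, hl1⟩ := hl
  have hzs : 0 < zstar := Set.mem_Ioi.1 hzstar
  rcases eq_or_lt_of_le hl0 with rfl | hl0'
  · norm_num
  rcases eq_or_lt_of_le hl1 with rfl | hl1'
  · norm_num
  have hcombo : (-1:ℝ) < l * β₁ + (1 - l) * β₂ := by nlinarith
  rw [VolterraProof.GStar_eq hx0 hx1 hzs hmin hα hb1 s,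
    VolterraProof.GStar_eq hx0 hx1 hzs hmin hα hb2 s,
    VolterraProof.GStar_eq hx0 hx1 hzs hmin hα hcombo s]
  rcases lt_trichotomy β₂ β₁ with hlt | heq | hgt
  · exact VolterraProof.main_ineq hx0 hx1 hzs hmin hα hs hb2 hlt hl0' hl1'
  · subst heq
    rw [show l * β₂ + (1 - l) * β₂ = β₂ from by ring]
    have hR : 0 < VolterraProof.Jf x α β₂ s / VolterraProof.Jinf x α β₂ :=
      div_pos (VolterraProof.Jf_pos hx0 hx1 hzs hmin hα hb2 hs)
        (VolterraProof.Jinf_pos hx0 hx1 hzs hmin hα hb2)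
    rw [← Real.rpow_add hR, show l + (1 - l) = 1 from by ring, Real.rpow_one]
  · have h1l : (0:ℝ) < 1 - l := by linarith
    have h2l : (1:ℝ) - l < 1 := by linarith
    have h := VolterraProof.main_ineq hx0 hx1 hzs hmin hα hs hb1 hgt h1l h2l
    rw [show (1:ℝ) - (1 - l) = l from by ring] at h
    rw [show (1 - l) * β₂ + l * β₁ = l * β₁ + (1 - l) * β₂ from by ring] at h
    calc (VolterraProof.Jf x α β₁ s / VolterraProof.Jinf x α β₁) ^ l *
          (VolterraProof.Jf x α β₂ s / VolterraProof.Jinf x α β₂) ^ (1 - l)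
        = (VolterraProof.Jf x α β₂ s / VolterraProof.Jinf x α β₂) ^ (1 - l) *
          (VolterraProof.Jf x α β₁ s / VolterraProof.Jinf x α β₁) ^ l := mul_comm _ _
      _ ≤ _ := h
end

section
/- Let α > -1, β ≥ 0 and x > 0. Then the normalized incomplete Volterra function is supermultiplicative-complementary in s: for all s, s′ > 0, G_β(x, α, s) · G_β(x, α, s′) − G_β(x, α, s + s′) ≥ 0. Equivalently, G*_β(x, α, s+s′) − G*_β(x, α, s) − G*_β(x, α, s′) + G*_β(x, α, s) · G*_β(x, α, s′) ≥ 0, where G*_β = 1 − G_β. -/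
open MeasureTheory Real Set

private lemma convex_incr {g : ℝ → ℝ} (hg : ConvexOn ℝ (Set.Ioi 0) g) {a b d : ℝ}
    (ha : 0 < a) (hab : a ≤ b) (hd : 0 ≤ d) : g (a + d) + g b ≤ g a + g (b + d) := by
  rcases eq_or_lt_of_le (by linarith : (0:ℝ) ≤ b + d - a) with h | h
  · have hd0 : d = 0 := by linarith
    have hab0 : a = b := by linarith
    subst hd0; subst hab0; simp
  · set t : ℝ := d / (b + d - a) with htdef
    have ht0 : 0 ≤ t := div_nonneg hd h.le
    have ht1 : t ≤ 1 := (div_le_one h).2 (by linarith)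
    have hmul : t * (b + d - a) = d := div_mul_cancel₀ d h.ne'
    have hamem : a ∈ Set.Ioi (0:ℝ) := ha
    have hbdmem : b + d ∈ Set.Ioi (0:ℝ) := by simp; linarith
    have e1 : (1 - t) • a + t • (b + d) = a + d := by
      simp only [smul_eq_mul]
      calc (1 - t) * a + t * (b + d) = a + t * (b + d - a) := by ring
        _ = a + d := by rw [hmul]
    have e2 : t • a + (1 - t) • (b + d) = b := by
      simp only [smul_eq_mul]
      calc t * a + (1 - t) * (b + d) = (b + d) - t * (b + d - a) := by ring
        _ = b := by rw [hmul]; ring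
    have h1 := hg.2 hamem hbdmem (by linarith : (0:ℝ) ≤ 1 - t) ht0 (by ring)
    have h2 := hg.2 hamem hbdmem ht0 (by linarith : (0:ℝ) ≤ 1 - t) (by ring)
    rw [e1] at h1
    rw [e2] at h2
    simp only [smul_eq_mul] at h1 h2
    linarith

private lemma gamma_swap {a b d : ℝ} (ha : 0 < a) (hab : a ≤ b) (hd : 0 ≤ d) :
    Real.Gamma (a + d) * Real.Gamma b ≤ Real.Gamma a * Real.Gamma (b + d) := by
  have h := convex_incr Real.convexOn_log_Gamma ha hab hd
  simp only [Function.comp] at h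
  have hga : 0 < Real.Gamma a := Real.Gamma_pos_of_pos ha
  have hgb : 0 < Real.Gamma b := Real.Gamma_pos_of_pos (by linarith)
  have hgad : 0 < Real.Gamma (a + d) := Real.Gamma_pos_of_pos (by linarith)
  have hgbd : 0 < Real.Gamma (b + d) := Real.Gamma_pos_of_pos (by linarith)
  have hlog : Real.log (Real.Gamma (a + d) * Real.Gamma b) ≤
      Real.log (Real.Gamma a * Real.Gamma (b + d)) := by
    rw [Real.log_mul hgad.ne' hgb.ne', Real.log_mul hga.ne' hgbd.ne']
    linarith
  exact (Real.log_le_log_iff (by positivity) (by positivity)).1 hlog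

private lemma f_pointwise {x α β : ℝ} (hx : 0 < x) (hα : -1 < α) (hβ : 0 ≤ β)
    {u v s : ℝ} (hu : 0 < u) (huv : u ≤ v) (hs : 0 ≤ s) :
    (x ^ (u + α) * u ^ β / (Real.Gamma (u + α + 1) * Real.Gamma (β + 1))) *
      (x ^ (v + s + α) * (v + s) ^ β / (Real.Gamma (v + s + α + 1) * Real.Gamma (β + 1))) ≤
    (x ^ (u + s + α) * (u + s) ^ β / (Real.Gamma (u + s + α + 1) * Real.Gamma (β + 1))) *
      (x ^ (v + α) * v ^ β / (Real.Gamma (v + α + 1) * Real.Gamma (β + 1))) := by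
  have hv : 0 < v := lt_of_lt_of_le hu huv
  have hG1 : 0 < Real.Gamma (u + α + 1) := Real.Gamma_pos_of_pos (by linarith)
  have hG2 : 0 < Real.Gamma (v + s + α + 1) := Real.Gamma_pos_of_pos (by linarith)
  have hG3 : 0 < Real.Gamma (u + s + α + 1) := Real.Gamma_pos_of_pos (by linarith)
  have hG4 : 0 < Real.Gamma (v + α + 1) := Real.Gamma_pos_of_pos (by linarith)
  have hK : 0 < Real.Gamma (β + 1) := Real.Gamma_pos_of_pos (by linarith)
  have hP : u ^ β * (v + s) ^ β ≤ (u + s) ^ β * v ^ β := by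
    rw [← Real.mul_rpow hu.le (by linarith : (0:ℝ) ≤ v + s),
      ← Real.mul_rpow (by linarith : (0:ℝ) ≤ u + s) hv.le]
    exact Real.rpow_le_rpow (by positivity) (by nlinarith) hβ
  have hG : Real.Gamma (u + s + α + 1) * Real.Gamma (v + α + 1) ≤
      Real.Gamma (u + α + 1) * Real.Gamma (v + s + α + 1) := by
    have h := gamma_swap (a := u + α + 1) (b := v + α + 1) (d := s)
      (by linarith) (by linarith) hs
    have e1 : u + α + 1 + s = u + s + α + 1 := by ring
    have e2 : v + α + 1 + s = v + s + α + 1 := by ring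
    rw [e1, e2] at h
    exact h
  have hX : x ^ (u + α) * x ^ (v + s + α) = x ^ (u + s + α) * x ^ (v + α) := by
    rw [← Real.rpow_add hx, ← Real.rpow_add hx]; ring_nf
  rw [div_mul_div_comm, div_mul_div_comm, div_le_div_iff₀ (by positivity) (by positivity)]
  calc x ^ (u + α) * u ^ β * (x ^ (v + s + α) * (v + s) ^ β) *
        (Real.Gamma (u + s + α + 1) * Real.Gamma (β + 1) *
          (Real.Gamma (v + α + 1) * Real.Gamma (β + 1)))
      = (x ^ (u + α) * x ^ (v + s + α)) * (Real.Gamma (β + 1) * Real.Gamma (β + 1)) *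
        ((u ^ β * (v + s) ^ β) * (Real.Gamma (u + s + α + 1) * Real.Gamma (v + α + 1))) := by
        ring
    _ = (x ^ (u + s + α) * x ^ (v + α)) * (Real.Gamma (β + 1) * Real.Gamma (β + 1)) *
        ((u ^ β * (v + s) ^ β) * (Real.Gamma (u + s + α + 1) * Real.Gamma (v + α + 1))) := by
        rw [hX]
    _ ≤ (x ^ (u + s + α) * x ^ (v + α)) * (Real.Gamma (β + 1) * Real.Gamma (β + 1)) *
        (((u + s) ^ β * v ^ β) * (Real.Gamma (u + α + 1) * Real.Gamma (v + s + α + 1))) := by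
        apply mul_le_mul_of_nonneg_left _ (by positivity)
        exact mul_le_mul hP hG (by positivity) (by positivity)
    _ = x ^ (u + s + α) * (u + s) ^ β * (x ^ (v + α) * v ^ β) *
        (Real.Gamma (u + α + 1) * Real.Gamma (β + 1) *
          (Real.Gamma (v + s + α + 1) * Real.Gamma (β + 1))) := by ring

/-- For `α > -1`, `β ≥ 0` and `x > 0`, the normalized incomplete Volterra function
satisfies `G_β(x,α,s) G_β(x,α,s′) − G_β(x,α,s+s′) ≥ 0`, equivalently
`G*_β(x,α,s+s′) − G*_β(x,α,s) − G*_β(x,α,s′) + G*_β(x,α,s) G*_β(x,α,s′) ≥ 0`. -/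
theorem volterraG_submultiplicative (x α β : ℝ)
    (hx : 0 < x) (hα : -1 < α) (hβ : 0 ≤ β) :
    ∀ s s' : ℝ, 0 < s → 0 < s' →
      (0 ≤ volterraG β x α s * volterraG β x α s' - volterraG β x α (s + s')) ∧
      (0 ≤ volterraGStar β x α (s + s') - volterraGStar β x α s -
        volterraGStar β x α s' + volterraGStar β x α s * volterraGStar β x α s') := by
  intro s s' hs hs'
  set f : ℝ → ℝ :=
    fun t => x ^ (t + α) * t ^ β / (Real.Gamma (t + α + 1) * Real.Gamma (β + 1)) with hfdef
  have hMu : volterraMu x β α = ∫ t in Ioi (0:ℝ), f t := rfl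
  have hInc : ∀ a : ℝ, volterraMuInc x β α a = ∫ t in Ioi a, f t := fun a => rfl
  have hStarDef : ∀ a : ℝ, volterraMuIncStar x β α a = ∫ t in Ioc (0:ℝ) a, f t := fun a => rfl
  by_cases hint : IntegrableOn f (Ioi (0:ℝ)) volume
  swap
  · have hμ0 : volterraMu x β α = 0 := by rw [hMu]; exact integral_undef hint
    constructor <;> simp [volterraG, volterraGStar, hμ0, div_zero]
  · -- pointwise positivity
    have hfpos : ∀ t : ℝ, 0 < t → 0 < f t := by
      intro t ht
      have h1 : 0 < Real.Gamma (t + α + 1) := Real.Gamma_pos_of_pos (by linarith)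
      have h2 : 0 < Real.Gamma (β + 1) := Real.Gamma_pos_of_pos (by linarith)
      have h3 : 0 < x ^ (t + α) := Real.rpow_pos_of_pos hx _
      have h4 : 0 < t ^ β := Real.rpow_pos_of_pos ht _
      positivity
    -- positivity of total mass
    have hμpos : 0 < volterraMu x β α := by
      rw [hMu]
      rw [setIntegral_pos_iff_support_of_nonneg_ae ?_ hint]
      · refine lt_of_lt_of_le ?_ (measure_mono
          (fun t (ht : t ∈ Ioi (0:ℝ)) => ⟨(hfpos t ht).ne', ht⟩ :
            Ioi (0:ℝ) ⊆ Function.support f ∩ Ioi 0))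
        simp [Real.volume_Ioi]
      · filter_upwards [ae_restrict_mem measurableSet_Ioi] with t ht using (hfpos t ht).le
    have hμne : volterraMu x β α ≠ 0 := hμpos.ne'
    -- translation
    have hpre : ∀ a : ℝ, (fun v : ℝ => v + s) ⁻¹' Ioi (a + s) = Ioi a := by
      intro a; ext v; simp
    have hshift : ∀ a : ℝ, ∫ v in Ioi a, f (v + s) = ∫ t in Ioi (a + s), f t := by
      intro a
      have h := (measurePreserving_add_right volume s).setIntegral_preimage_emb
        (measurableEmbedding_addRight s) f (Ioi (a + s))
      rwa [hpre a] at h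
    have hshiftInt : ∀ a : ℝ, 0 ≤ a → IntegrableOn (fun v => f (v + s)) (Ioi a) volume := by
      intro a ha
      have h1 : IntegrableOn f (Ioi (a + s)) volume :=
        hint.mono_set (Ioi_subset_Ioi (by linarith))
      have h := ((measurePreserving_add_right volume s).integrableOn_comp_preimage
        (measurableEmbedding_addRight s)).2 h1
      rwa [hpre a] at h
    -- the four pieces
    set B : ℝ := ∫ u in Ioc (0:ℝ) s', f u with hB
    set Q : ℝ := ∫ v in Ioi s', f v with hQ
    set C : ℝ := ∫ u in Ioc (0:ℝ) s', f (u + s) with hC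
    set P : ℝ := ∫ v in Ioi s', f (v + s) with hP
    have hQint : IntegrableOn f (Ioi s') volume := hint.mono_set (Ioi_subset_Ioi hs'.le)
    have hBint : IntegrableOn f (Ioc (0:ℝ) s') volume := hint.mono_set Ioc_subset_Ioi_self
    have hPint : IntegrableOn (fun v => f (v + s)) (Ioi s') volume := hshiftInt s' hs'.le
    have hCint : IntegrableOn (fun u => f (u + s)) (Ioc (0:ℝ) s') volume :=
      (hshiftInt 0 le_rfl).mono_set Ioc_subset_Ioi_self
    have hsplit : ∀ g : ℝ → ℝ, IntegrableOn g (Ioi (0:ℝ)) volume →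
        ∫ t in Ioi (0:ℝ), g t = (∫ t in Ioc (0:ℝ) s', g t) + ∫ t in Ioi s', g t := by
      intro g hg
      rw [← setIntegral_union (Ioc_disjoint_Ioi le_rfl) measurableSet_Ioi
        (hg.mono_set Ioc_subset_Ioi_self) (hg.mono_set (Ioi_subset_Ioi hs'.le)),
        Ioc_union_Ioi_eq_Ioi hs'.le]
    have hμBQ : volterraMu x β α = B + Q := by rw [hMu]; exact hsplit f hint
    have hIncS : volterraMuInc x β α s = C + P := by
      rw [hInc s, show s = 0 + s by ring, ← hshift 0]
      exact hsplit (fun v => f (v + s)) (hshiftInt 0 le_rfl)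
    have hIncSS : volterraMuInc x β α (s + s') = P := by
      rw [hInc, show s + s' = s' + s by ring, ← hshift s']
    have hIncS' : volterraMuInc x β α s' = Q := rfl
    -- inner inequality
    have hinner : ∀ u ∈ Ioc (0:ℝ) s', f u * P ≤ f (u + s) * Q := by
      intro u hu
      have h1 : ∀ v ∈ Ioi s', f u * f (v + s) ≤ f (u + s) * f v := by
        intro v hv
        exact f_pointwise hx hα hβ hu.1 (le_trans hu.2 (le_of_lt hv)) hs.le
      calc f u * P = ∫ v in Ioi s', f u * f (v + s) := by
            rw [MeasureTheory.integral_const_mul]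
        _ ≤ ∫ v in Ioi s', f (u + s) * f v :=
            setIntegral_mono_on (hPint.const_mul _) (hQint.const_mul _) measurableSet_Ioi h1
        _ = f (u + s) * Q := by rw [MeasureTheory.integral_const_mul]
    -- outer inequality
    have hkey : B * P ≤ C * Q := by
      calc B * P = ∫ u in Ioc (0:ℝ) s', f u * P := by
            rw [MeasureTheory.integral_mul_const]
        _ ≤ ∫ u in Ioc (0:ℝ) s', f (u + s) * Q :=
            setIntegral_mono_on (hBint.mul_const _) (hCint.mul_const _) measurableSet_Ioc hinner
        _ = C * Q := by rw [MeasureTheory.integral_mul_const]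
    have main1 : 0 ≤ volterraMuInc x β α s * volterraMuInc x β α s' -
        volterraMuInc x β α (s + s') * volterraMu x β α := by
      rw [hIncS, hIncS', hIncSS, hμBQ]; nlinarith [hkey]
    have goal1 : 0 ≤ volterraG β x α s * volterraG β x α s' - volterraG β x α (s + s') := by
      have heq : volterraG β x α s * volterraG β x α s' - volterraG β x α (s + s') =
          (volterraMuInc x β α s * volterraMuInc x β α s' -
            volterraMuInc x β α (s + s') * volterraMu x β α) /
          (volterraMu x β α * volterraMu x β α) := by
        simp only [volterraG]; field_simp
      rw [heq]
      exact div_nonneg main1 (by positivity)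
    refine ⟨goal1, ?_⟩
    have hstar : ∀ t : ℝ, 0 < t → volterraGStar β x α t = 1 - volterraG β x α t := by
      intro t ht
      have hsum : volterraMuIncStar x β α t + volterraMuInc x β α t = volterraMu x β α := by
        rw [hStarDef, hInc, hMu,
          ← setIntegral_union (Ioc_disjoint_Ioi le_rfl) measurableSet_Ioi
            (hint.mono_set Ioc_subset_Ioi_self) (hint.mono_set (Ioi_subset_Ioi ht.le)),
          Ioc_union_Ioi_eq_Ioi ht.le]
      simp only [volterraGStar, volterraG]
      field_simp
      linarith
    rw [hstar (s + s') (by linarith), hstar s hs, hstar s' hs']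
    nlinarith [goal1]
end
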